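/- arXiv:1708.02966 — 3 statements merged into one kernel-verified Lean document; each statement's English description precedes it below -/
import Mathlib

section
/- In the sparse sign-consistent JL construction, suppose x ∈ ℝⁿ is a unit vector with |x_1| ≥ |x_2| ≥ … ≥ |x_n|, p is an integer with 2 ≤ p ≤ n, and B := m/s². Then there is a universal constant C > 0 such that: if B ≥ e then ‖∑_{i=1}^p ∑_{j≤p, j≠i} |Q_{i,j} x_i x_j|‖_p ≤ C·p/log B, and if B < e then ‖∑_{i=1}^p ∑_{j≤p, j≠i} |Q_{i,j} x_i x_j|‖_p ≤ C·p/B. -/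
open MeasureTheory ProbabilityTheory Finset Real

/-- The `p`-th moment norm `(E|Y|^p)^(1/p)` of a real random variable. -/
noncomputable def pnorm {Ω : Type*} [MeasureSpace Ω] (Y : Ω → ℝ) (p : ℝ) : ℝ :=
  (∫ ω, |Y ω| ^ p) ^ (1 / p)

/-- The hash variables `η` of the sparse, sign-consistent JL construction. -/
structure EtaSSCJL (Ω : Type) [MeasureSpace Ω] (n m s : ℕ) where
  η : Fin m → Fin n → Ω → ℝ
  meas_eta : ∀ r i, Measurable (η r i)
  eta01 : ∀ r i ω, η r i ω = 0 ∨ η r i ω = 1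
  eta_mean : ∀ r i, ∫ ω, η r i ω = (s : ℝ) / m
  cols_indep : iIndepFun (fun i ω => fun r => η r i ω) ℙ
  col_sum : ∀ i, ∀ᵐ ω : Ω, ∑ r, η r i ω = (s : ℝ)
  neg_corr : ∀ (S : Finset (Fin m)) (i : Fin n), ∫ ω, ∏ r ∈ S, η r i ω ≤ ((s : ℝ) / m) ^ S.card

/-- `Q i j` is the number of collisions between the nonzero entries of columns `i` and `j`. -/
noncomputable def EtaSSCJL.Q {Ω : Type} [MeasureSpace Ω] {n m s : ℕ} (c : EtaSSCJL Ω n m s)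
    (i j : Fin n) (ω : Ω) : ℝ :=
  ∑ r, c.η r i ω * c.η r j ω


lemma termB1 (p k : ℕ) (hk1 : 1 ≤ k) (hkp : k ≤ p) (hp : 2 ≤ p) (t : ℝ) (ht : 0 < t)
    (h : t ≤ Real.exp (-1)) :
    (k:ℝ)^(p-k) * (Real.exp 2 * p * t)^k ≤ (Real.exp 3 * p / Real.log (1/t))^p := by
  have hK : (1:ℝ) ≤ (k:ℝ) := by exact_mod_cast hk1
  have hP : (2:ℝ) ≤ (p:ℝ) := by exact_mod_cast hp
  have hKP : (k:ℝ) ≤ (p:ℝ) := by exact_mod_cast hkp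
  have hK0 : (0:ℝ) < k := by linarith
  have hP0 : (0:ℝ) < p := by linarith
  have hlogt : Real.log t ≤ -1 := by
    calc Real.log t ≤ Real.log (Real.exp (-1)) := Real.log_le_log ht h
      _ = -1 := Real.log_exp _
  set β : ℝ := Real.log (1/t) with hβdef
  have hβ : β = - Real.log t := by rw [hβdef, one_div, Real.log_inv]
  have hβ1 : (1:ℝ) ≤ β := by rw [hβ]; linarith
  have hβ0 : (0:ℝ) < β := by linarith
  have hL : (0:ℝ) < (k:ℝ)^(p-k) * (Real.exp 2 * p * t)^k := by positivity
  have hR : (0:ℝ) < (Real.exp 3 * p / β)^p := by positivity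
  rw [← Real.log_le_log_iff hL hR]
  have hcast : ((p - k : ℕ) : ℝ) = (p:ℝ) - k := by
    rw [Nat.cast_sub hkp]
  have eL : Real.log ((k:ℝ)^(p-k) * (Real.exp 2 * p * t)^k)
      = ((p:ℝ) - k) * Real.log k + k * (2 + Real.log p + Real.log t) := by
    rw [Real.log_mul (by positivity) (by positivity), Real.log_pow, Real.log_pow,
      Real.log_mul (by positivity) ht.ne', Real.log_mul (by positivity) hP0.ne',
      Real.log_exp, hcast]
  have eR : Real.log ((Real.exp 3 * p / β)^p)
      = (p:ℝ) * (3 + Real.log p - Real.log β) := by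
    rw [Real.log_pow, Real.log_div (by positivity) hβ0.ne',
      Real.log_mul (by positivity) hP0.ne', Real.log_exp]
  rw [eL, eR]
  set a := Real.log k
  set b := Real.log p
  set Lb := Real.log β
  have ha0 : 0 ≤ a := Real.log_nonneg hK
  -- fact 1 : P * Lb ≤ K*β - P + P*b - P*a
  have f1 : Real.log ((k:ℝ) * β / p) ≤ (k:ℝ) * β / p - 1 :=
    Real.log_le_sub_one_of_pos (by positivity)
  have f1e : Real.log ((k:ℝ) * β / p) = a + Lb - b := by
    rw [Real.log_div (by positivity) hP0.ne', Real.log_mul hK0.ne' hβ0.ne']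
  rw [f1e] at f1
  have f1' : (p:ℝ) * Lb ≤ (k:ℝ) * β - p + p * b - p * a := by
    have := mul_le_mul_of_nonneg_left f1 hP0.le
    have hdiv : (p:ℝ) * ((k:ℝ) * β / p - 1) = (k:ℝ) * β - p := by
      field_simp
    linarith [this]
  -- fact 2 : K*b - K*a ≤ P - K
  have f2 : Real.log ((p:ℝ) / k) ≤ (p:ℝ)/k - 1 :=
    Real.log_le_sub_one_of_pos (by positivity)
  have f2e : Real.log ((p:ℝ)/k) = b - a := Real.log_div hP0.ne' hK0.ne'
  rw [f2e] at f2
  have f2' : (k:ℝ) * b - (k:ℝ) * a ≤ (p:ℝ) - k := by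
    have := mul_le_mul_of_nonneg_left f2 hK0.le
    have : (k:ℝ) * (b - a) ≤ (k:ℝ) * ((p:ℝ)/k - 1) := this
    have hdiv : (k:ℝ) * ((p:ℝ)/k - 1) = (p:ℝ) - k := by field_simp
    linarith [this]
  have hβt : Real.log t = -β := by rw [hβ]; ring
  rw [hβt]
  linarith [f1', f2', hP, hKP, hK]

lemma termB2 (p k : ℕ) (hk1 : 1 ≤ k) (hkp : k ≤ p) (hp : 2 ≤ p) (t : ℝ) (ht : 0 < t)
    (h : Real.exp (-1) < t) :
    (k:ℝ)^(p-k) * (Real.exp 2 * p * t)^k ≤ (Real.exp 3 * p * t)^p := by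
  have hK : (1:ℝ) ≤ (k:ℝ) := by exact_mod_cast hk1
  have hP : (2:ℝ) ≤ (p:ℝ) := by exact_mod_cast hp
  have hKP : (k:ℝ) ≤ (p:ℝ) := by exact_mod_cast hkp
  have hK0 : (0:ℝ) < k := by linarith
  have hP0 : (0:ℝ) < p := by linarith
  have hlogt : -1 < Real.log t := by
    calc (-1:ℝ) = Real.log (Real.exp (-1)) := (Real.log_exp _).symm
      _ < Real.log t := Real.log_lt_log (Real.exp_pos _) h
  have hL : (0:ℝ) < (k:ℝ)^(p-k) * (Real.exp 2 * p * t)^k := by positivity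
  have hR : (0:ℝ) < (Real.exp 3 * p * t)^p := by positivity
  rw [← Real.log_le_log_iff hL hR]
  have hcast : ((p - k : ℕ) : ℝ) = (p:ℝ) - k := by rw [Nat.cast_sub hkp]
  have eL : Real.log ((k:ℝ)^(p-k) * (Real.exp 2 * p * t)^k)
      = ((p:ℝ) - k) * Real.log k + k * (2 + Real.log p + Real.log t) := by
    rw [Real.log_mul (by positivity) (by positivity), Real.log_pow, Real.log_pow,
      Real.log_mul (by positivity) ht.ne', Real.log_mul (by positivity) hP0.ne',
      Real.log_exp, hcast]
  have eR : Real.log ((Real.exp 3 * p * t)^p)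
      = (p:ℝ) * (3 + Real.log p + Real.log t) := by
    rw [Real.log_pow, Real.log_mul (by positivity) ht.ne',
      Real.log_mul (by positivity) hP0.ne', Real.log_exp]

  rw [eL, eR]
  set a := Real.log k
  set b := Real.log p
  set c := Real.log t
  have hab : a ≤ b := Real.log_le_log hK0 hKP
  have hf : ((p:ℝ) - k) * a ≤ ((p:ℝ) - k) * b :=
    mul_le_mul_of_nonneg_left hab (by linarith)
  linarith [hf, hlogt, hP, hKP, hK, Real.log_nonneg hK, mul_le_mul_of_nonneg_left (by linarith [hlogt] : b ≤ (b + c) + 1) (by linarith : (0:ℝ) ≤ (p:ℝ) - k)]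

lemma fact_lb (k : ℕ) (hk : 1 ≤ k) : ((k:ℝ))^k / Real.exp 1 ^ k ≤ (k.factorial : ℝ) := by
  have h : (k:ℝ) ^ k / k.factorial ≤ Real.exp k := by
    have h := Real.sum_le_exp_of_nonneg (by positivity : (0:ℝ) ≤ (k:ℝ)) (k+1)
    refine le_trans ?_ h
    exact Finset.single_le_sum (f := fun i => (k:ℝ) ^ i / i.factorial)
      (fun i _ => by positivity) (Finset.self_mem_range_succ k)
  have hfp : (0:ℝ) < k.factorial := by exact_mod_cast k.factorial_pos
  have he : Real.exp (k:ℝ) = Real.exp 1 ^ k := by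
    rw [← Real.exp_nat_mul]; ring_nf
  rw [div_le_iff₀ hfp] at h
  rw [div_le_iff₀ (by positivity)]
  rw [he] at h
  linarith [h]

lemma termA (p k l : ℕ) (s q : ℝ) (hl1 : 1 ≤ l) (hlk : l ≤ k) (hkp : k ≤ p)
    (hs : 1 ≤ s) (hq : 0 < q) (hls : (l:ℝ) ≤ s) :
    (k:ℝ)^p * ((l:ℝ)*p*q)^k * s^l / ((k.factorial : ℝ) * l.factorial)
      ≤ (k:ℝ)^(p-k) * (Real.exp 2 * p * (q*s))^k := by
  have hk1 : 1 ≤ k := le_trans hl1 hlk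
  have hK0 : (0:ℝ) < k := by exact_mod_cast hk1
  have hL0 : (0:ℝ) < l := by exact_mod_cast hl1
  have hP0 : (0:ℝ) < p := by
    have : 1 ≤ p := le_trans hk1 hkp
    exact_mod_cast Nat.lt_of_lt_of_le Nat.zero_lt_one this
  have he1 : (1:ℝ) ≤ Real.exp 1 := by
    have := Real.add_one_le_exp (1:ℝ); linarith
  set e : ℝ := Real.exp 1 with hedef
  have hD : (0:ℝ) < (k:ℝ)^k / e^k * ((l:ℝ)^l / e^l) := by positivity
  have hDle : (k:ℝ)^k / e^k * ((l:ℝ)^l / e^l) ≤ (k.factorial : ℝ) * l.factorial := by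
    have h1 := fact_lb k hk1
    have h2 := fact_lb l hl1
    exact mul_le_mul h1 h2 (by positivity) (by positivity)
  have hA0 : (0:ℝ) ≤ (k:ℝ)^p * ((l:ℝ)*p*q)^k * s^l := by positivity
  calc (k:ℝ)^p * ((l:ℝ)*p*q)^k * s^l / ((k.factorial : ℝ) * l.factorial)
      ≤ (k:ℝ)^p * ((l:ℝ)*p*q)^k * s^l / ((k:ℝ)^k / e^k * ((l:ℝ)^l / e^l)) :=
        div_le_div_of_nonneg_left hA0 hD hDle
    _ = (k:ℝ)^(p-k) * (e * p * q)^k * ((e*s)^l * (l:ℝ)^(k-l)) := by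
        rw [div_eq_iff hD.ne']
        have e1 : (k:ℝ)^p = (k:ℝ)^(p-k) * (k:ℝ)^k := by
          rw [← pow_add, Nat.sub_add_cancel hkp]
        have e2 : ((l:ℝ)*(p:ℝ)*q)^k = (l:ℝ)^(k-l) * (l:ℝ)^l * ((p:ℝ)^k*q^k) := by
          rw [mul_pow, mul_pow, show (l:ℝ)^k = (l:ℝ)^(k-l) * (l:ℝ)^l by
            rw [← pow_add, Nat.sub_add_cancel hlk]]
          ring
        rw [e1, e2]
        have hek : (0:ℝ) < e^k := by positivity
        have hel : (0:ℝ) < e^l := by positivity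
        field_simp
        ring
    _ ≤ (k:ℝ)^(p-k) * (e * p * q)^k * ((e*s)^l * (e*s)^(k-l)) := by
        gcongr
        · exact le_trans hls (by nlinarith)
    _ = (k:ℝ)^(p-k) * (Real.exp 2 * p * (q*s))^k := by
        rw [← pow_add, show l + (k - l) = k by omega]
        have he2 : Real.exp 2 = e * e := by rw [hedef, ← Real.exp_add]; norm_num
        rw [he2, show (e*e*(p:ℝ)*(q*s)) = (e*(p:ℝ)*q) * (e*s) by ring, mul_pow,
          mul_pow, mul_pow]
        ring

-- product over image for 0/1-valued functions
lemma prod_image_idem {α β : Type*} [DecidableEq β] (K : Finset α) (f : α → β) (v : β → ℝ)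
    (hv : ∀ b, v b = 0 ∨ v b = 1) :
    ∏ a ∈ K, v (f a) = ∏ b ∈ K.image f, v b := by
  classical
  induction K using Finset.induction_on with
  | empty => simp
  | @insert a K' ha ih =>
    rw [Finset.prod_insert ha, Finset.image_insert]
    by_cases hfa : f a ∈ K'.image f
    · rw [Finset.insert_eq_self.mpr hfa, ih]
      rcases hv (f a) with h0 | h1
      · rw [h0, zero_mul]
        exact (Finset.prod_eq_zero hfa h0).symm
      · rw [h1, one_mul]
    · rw [Finset.prod_insert hfa, ih]

-- integral of product of independent bounded rvs
lemma integral_prod_indep {ι Ω : Type*} [MeasureSpace Ω] [IsProbabilityMeasure (ℙ : Measure Ω)]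
    (g : ι → Ω → ℝ) (hind : iIndepFun g ℙ)
    (hmeas : ∀ j, Measurable (g j)) (hbd : ∀ j ω, |g j ω| ≤ 1) (C : Finset ι) :
    ∫ ω, ∏ j ∈ C, g j ω = ∏ j ∈ C, ∫ ω, g j ω := by
  have hint : ∀ j, Integrable (g j) ℙ := by
    intro j
    refine (integrable_const (1:ℝ)).mono' (hmeas j).aestronglyMeasurable ?_
    exact Filter.Eventually.of_forall (fun ω => by simpa using hbd j ω)
  classical
  induction C using Finset.induction_on with
  | empty => simp
  | @insert a C' ha ih =>
    have hprodmeas : Measurable (∏ j ∈ C', g j) := by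
      have : (∏ j ∈ C', g j) = fun ω => ∏ j ∈ C', g j ω := by
        funext ω; rw [Finset.prod_apply]
      rw [this]
      exact Finset.measurable_prod _ (fun j _ => hmeas j)
    have hprodbd : ∀ ω, |(∏ j ∈ C', g j) ω| ≤ 1 := by
      intro ω
      rw [Finset.prod_apply, Finset.abs_prod]
      exact Finset.prod_le_one (fun j _ => abs_nonneg _) (fun j _ => hbd j ω)
    have hprodint : Integrable (∏ j ∈ C', g j) ℙ := by
      refine (integrable_const (1:ℝ)).mono' hprodmeas.aestronglyMeasurable ?_
      exact Filter.Eventually.of_forall (fun ω => by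
        rw [Real.norm_eq_abs]; exact hprodbd ω)
    have hdep : IndepFun (∏ j ∈ C', g j) (g a) ℙ :=
      hind.indepFun_finsetProd_of_notMem hmeas ha
    have key : ∫ ω, (∏ j ∈ C', g j) ω * g a ω = (∫ ω, (∏ j ∈ C', g j) ω) * ∫ ω, g a ω :=
      hdep.integral_fun_mul_eq_mul_integral hprodint.aestronglyMeasurable
        (hint a).aestronglyMeasurable
    have hfun : (∫ ω, (∏ j ∈ C', g j) ω) = ∏ j ∈ C', ∫ ω, g j ω := by
      rw [show (∫ ω, (∏ j ∈ C', g j) ω) = ∫ ω, ∏ j ∈ C', g j ω from by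
        congr 1; funext ω; rw [Finset.prod_apply]]
      exact ih
    rw [Finset.prod_insert ha]
    calc ∫ ω, ∏ j ∈ insert a C', g j ω = ∫ ω, (∏ j ∈ C', g j) ω * g a ω := by
          congr 1; funext ω
          rw [Finset.prod_insert ha, Finset.prod_apply]; ring
      _ = (∫ ω, (∏ j ∈ C', g j) ω) * ∫ ω, g a ω := key
      _ = (∏ j ∈ C', ∫ ω, g j ω) * ∫ ω, g a ω := by rw [hfun]
      _ = (∫ ω, g a ω) * ∏ j ∈ C', ∫ ω, g j ω := by ring

lemma sum_if_le_card (N p : ℕ) (c : ℕ → Prop) [DecidablePred c] (B : ℝ) (hB : 0 ≤ B)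
    (hc : ∀ j, c j → 1 ≤ j ∧ j ≤ p) :
    ∑ j ∈ Finset.range N, (if c j then B else 0) ≤ p * B := by
  rw [← Finset.sum_filter, Finset.sum_const]
  have hsub : (Finset.range N).filter c ⊆ Finset.Icc 1 p := by
    intro j hj
    rw [Finset.mem_filter] at hj
    rcases hc j hj.2 with ⟨h1, h2⟩
    exact Finset.mem_Icc.mpr ⟨h1, h2⟩
  have hcard : ((Finset.range N).filter c).card ≤ p := by
    calc ((Finset.range N).filter c).card ≤ (Finset.Icc 1 p).card := Finset.card_le_card hsub
      _ = p := by rw [Nat.card_Icc]; omega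
  calc (((Finset.range N).filter c).card : ℕ) • B ≤ (p : ℕ) • B := by
        exact smul_le_smul_of_nonneg_right (by exact_mod_cast hcard) hB
    _ = p * B := by rw [nsmul_eq_mul]

noncomputable def Bnd (p : ℕ) (t : ℝ) : ℝ :=
  if t ≤ Real.exp (-1) then (Real.exp 3 * p / Real.log (1/t))^p else (Real.exp 3 * p * t)^p



lemma Bnd_nonneg (p : ℕ) (t : ℝ) (ht : 0 < t) : 0 ≤ Bnd p t := by
  unfold Bnd
  split_ifs with h
  · have h1 : (1:ℝ) ≤ Real.log (1/t) := by
      rw [one_div, Real.log_inv]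
      have : Real.log t ≤ -1 := by
        calc Real.log t ≤ Real.log (Real.exp (-1)) := Real.log_le_log ht h
          _ = -1 := Real.log_exp _
      linarith
    positivity
  · positivity


lemma termBnd (p k l m s : ℕ) (hp : 2 ≤ p) (hl1 : 1 ≤ l) (hlk : l ≤ k) (hkp : k ≤ p)
    (hs : 1 ≤ s) (hsm : s ≤ m) (hls : l ≤ s) :
    (k:ℝ)^p * ((l:ℝ)*p*((s:ℝ)/m))^k * (s:ℝ)^l / ((k.factorial : ℝ) * l.factorial)
      ≤ Bnd p ((s:ℝ)/m * s) := by
  have hm1 : 1 ≤ m := le_trans hs hsm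
  have hm0 : (0:ℝ) < m := by exact_mod_cast hm1
  have hq0 : (0:ℝ) < (s:ℝ)/m := by
    have : (0:ℝ) < s := by exact_mod_cast hs
    positivity
  have ht0 : (0:ℝ) < (s:ℝ)/m * s := by
    have : (0:ℝ) < s := by exact_mod_cast hs
    positivity
  have hk1 : 1 ≤ k := le_trans hl1 hlk
  have step1 := termA p k l s ((s:ℝ)/m) hl1 hlk hkp (by exact_mod_cast hs) hq0
    (by exact_mod_cast hls)
  unfold Bnd
  split_ifs with h
  · exact le_trans step1 (termB1 p k hk1 hkp hp _ ht0 h)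
  · exact le_trans step1 (termB2 p k hk1 hkp hp _ ht0 (not_le.mp h))

lemma final_sum (p s m jc : ℕ) (hp : 2 ≤ p) (hs : 1 ≤ s) (hsm : s ≤ m) (hjc : jc ≤ p) :
    ∑ l ∈ Finset.range (m+1), (m.choose l : ℝ) *
        (if l ≤ s then ((s:ℝ)/m)^l * (∑ k ∈ Finset.range (l*jc+1), (((l*jc).choose k : ℕ) : ℝ) *
          (if (1 ≤ k ∧ l ≤ k ∧ k ≤ p) then (k:ℝ)^p * ((s:ℝ)/m)^k else 0)) else 0)
      ≤ (p:ℝ) * ((p:ℝ) * Bnd p ((s:ℝ)/m * s)) := by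
  have hm1 : 1 ≤ m := le_trans hs hsm
  have hm0 : (0:ℝ) < m := by exact_mod_cast hm1
  have hs0 : (0:ℝ) < s := by exact_mod_cast hs
  have hq0 : (0:ℝ) < (s:ℝ)/m := by positivity
  have ht0 : (0:ℝ) < (s:ℝ)/m * s := by positivity
  have hB0 : 0 ≤ Bnd p ((s:ℝ)/m * s) := Bnd_nonneg p _ ht0
  have hmq : (m:ℝ) * ((s:ℝ)/m) = s := by field_simp
  -- per-l bound
  have hl : ∀ l ∈ Finset.range (m+1), (m.choose l : ℝ) *
        (if l ≤ s then ((s:ℝ)/m)^l * (∑ k ∈ Finset.range (l*jc+1), (((l*jc).choose k : ℕ) : ℝ) *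
          (if (1 ≤ k ∧ l ≤ k ∧ k ≤ p) then (k:ℝ)^p * ((s:ℝ)/m)^k else 0)) else 0)
      ≤ (if (1 ≤ l ∧ l ≤ p) then (p:ℝ) * Bnd p ((s:ℝ)/m * s) else 0) := by
    intro l _
    by_cases hls : l ≤ s
    · rw [if_pos hls]
      by_cases hlp : 1 ≤ l ∧ l ≤ p
      · rw [if_pos hlp]
        -- push the choose and q^l inside the k-sum, bound each term
        rw [Finset.mul_sum, Finset.mul_sum]
        have hterm : ∀ k ∈ Finset.range (l*jc+1),
            (m.choose l : ℝ) * (((s:ℝ)/m)^l * ((((l*jc).choose k : ℕ) : ℝ) *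
              (if (1 ≤ k ∧ l ≤ k ∧ k ≤ p) then (k:ℝ)^p * ((s:ℝ)/m)^k else 0)))
            ≤ (if (1 ≤ k ∧ l ≤ k ∧ k ≤ p) then Bnd p ((s:ℝ)/m * s) else 0) := by
          intro k _
          by_cases hg : 1 ≤ k ∧ l ≤ k ∧ k ≤ p
          · rw [if_pos hg, if_pos hg]
            obtain ⟨hk1, hlk, hkp⟩ := hg
            -- chain through factorials
            have c1 : (m.choose l : ℝ) ≤ (m:ℝ)^l / l.factorial := Nat.choose_le_pow_div l m
            have c2 : (((l*jc).choose k : ℕ) : ℝ) ≤ ((l:ℝ)*p)^k / k.factorial := by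
              have h := Nat.choose_le_pow_div (α := ℝ) k (l*jc)
              rw [Nat.cast_mul] at h
              refine le_trans h ?_
              have hjp : (jc:ℝ) ≤ (p:ℝ) := by exact_mod_cast hjc
              have hl0 : (0:ℝ) ≤ l := by positivity
              gcongr
            have hchain : (m.choose l : ℝ) * (((s:ℝ)/m)^l * ((((l*jc).choose k : ℕ) : ℝ) *
                ((k:ℝ)^p * ((s:ℝ)/m)^k)))
                ≤ (k:ℝ)^p * ((l:ℝ)*p*((s:ℝ)/m))^k * (s:ℝ)^l
                  / ((k.factorial : ℝ) * l.factorial) := by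
              calc (m.choose l : ℝ) * (((s:ℝ)/m)^l * ((((l*jc).choose k : ℕ) : ℝ) *
                  ((k:ℝ)^p * ((s:ℝ)/m)^k)))
                  ≤ ((m:ℝ)^l / l.factorial) * (((s:ℝ)/m)^l * ((((l:ℝ)*p)^k / k.factorial) *
                    ((k:ℝ)^p * ((s:ℝ)/m)^k))) := by
                    have h1 : (0:ℝ) ≤ ((s:ℝ)/m)^l := by positivity
                    have h2 : (0:ℝ) ≤ (k:ℝ)^p * ((s:ℝ)/m)^k := by positivity
                    gcongr
                _ = (k:ℝ)^p * ((l:ℝ)*p*((s:ℝ)/m))^k * ((m:ℝ)*((s:ℝ)/m))^l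
                    / ((k.factorial : ℝ) * l.factorial) := by
                    rw [mul_pow, mul_pow ((l:ℝ)*(p:ℝ)), mul_pow]
                    have hmne : (m:ℝ) ≠ 0 := hm0.ne'
                    field_simp
                    have hmm : (m:ℝ)^l * (m:ℝ)⁻¹^l = 1 := by
                      rw [← mul_pow, mul_inv_cancel₀ hmne, one_pow]
                    linear_combination ((s:ℝ)^l * (l:ℝ)^k) * hmm
                _ = (k:ℝ)^p * ((l:ℝ)*p*((s:ℝ)/m))^k * (s:ℝ)^l
                    / ((k.factorial : ℝ) * l.factorial) := by rw [hmq]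
            refine le_trans hchain ?_
            exact termBnd p k l m s hp hlp.1 hlk hkp hs hsm hls
          · rw [if_neg hg, if_neg hg, mul_zero, mul_zero, mul_zero]
        calc ∑ k ∈ Finset.range (l*jc+1), (m.choose l : ℝ) * (((s:ℝ)/m)^l *
              ((((l*jc).choose k : ℕ) : ℝ) *
              (if (1 ≤ k ∧ l ≤ k ∧ k ≤ p) then (k:ℝ)^p * ((s:ℝ)/m)^k else 0)))
            ≤ ∑ k ∈ Finset.range (l*jc+1),
              (if (1 ≤ k ∧ l ≤ k ∧ k ≤ p) then Bnd p ((s:ℝ)/m * s) else 0) :=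
              Finset.sum_le_sum hterm
          _ ≤ (p:ℝ) * Bnd p ((s:ℝ)/m * s) :=
              sum_if_le_card _ p _ _ hB0 (fun j hj => ⟨hj.1, hj.2.2⟩)
      · -- 1 ≤ l ∧ l ≤ p fails: all k-terms vanish
        rw [if_neg hlp]
        have hz : ∀ k ∈ Finset.range (l*jc+1), (((l*jc).choose k : ℕ) : ℝ) *
            (if (1 ≤ k ∧ l ≤ k ∧ k ≤ p) then (k:ℝ)^p * ((s:ℝ)/m)^k else 0) = 0 := by
          intro k _
          by_cases hg : 1 ≤ k ∧ l ≤ k ∧ k ≤ p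
          · obtain ⟨hk1, hlk2, hkp2⟩ := hg
            have hl0 : l = 0 := by
              by_contra hne
              exact hlp ⟨by omega, by omega⟩
            rw [hl0]
            norm_num [Nat.choose_eq_zero_of_lt (show 0 < k by omega)]
          · rw [if_neg hg, mul_zero]
        rw [Finset.sum_congr rfl hz, Finset.sum_const, smul_zero, mul_zero, mul_zero]
    · rw [if_neg hls]
      rw [mul_zero]
      split_ifs with h
      · positivity
      · exact le_refl 0
  calc ∑ l ∈ Finset.range (m+1), (m.choose l : ℝ) *
        (if l ≤ s then ((s:ℝ)/m)^l * (∑ k ∈ Finset.range (l*jc+1), (((l*jc).choose k : ℕ) : ℝ) *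
          (if (1 ≤ k ∧ l ≤ k ∧ k ≤ p) then (k:ℝ)^p * ((s:ℝ)/m)^k else 0)) else 0)
      ≤ ∑ l ∈ Finset.range (m+1), (if (1 ≤ l ∧ l ≤ p) then (p:ℝ) * Bnd p ((s:ℝ)/m * s) else 0) :=
        Finset.sum_le_sum hl
    _ ≤ (p:ℝ) * ((p:ℝ) * Bnd p ((s:ℝ)/m * s)) :=
        sum_if_le_card _ p _ _ (by positivity) (fun j hj => ⟨hj.1, hj.2⟩)

lemma counting {m' n' : ℕ} (p s : ℕ) (hp : 0 < p) (J : Finset (Fin n')) (q : ℝ) (hq0 : 0 ≤ q) :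
    ∑ f ∈ Fintype.piFinset (fun _ : Fin p => (Finset.univ : Finset (Fin m')) ×ˢ J),
      (if ((Finset.univ.image f).image Prod.fst).card ≤ s
        then q^((((Finset.univ.image f).image Prod.fst).card) + (Finset.univ.image f).card)
        else 0)
    ≤ ∑ l ∈ Finset.range (m'+1), (m'.choose l : ℝ) *
        (if l ≤ s then q^l * (∑ k ∈ Finset.range (l*J.card+1), (((l*J.card).choose k : ℕ) : ℝ) *
          (if (1 ≤ k ∧ l ≤ k ∧ k ≤ p) then (k:ℝ)^p * q^k else 0)) else 0) := by
  classical
  set A : Finset (Fin m' × Fin n') := (Finset.univ : Finset (Fin m')) ×ˢ J with hA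
  set F := Fintype.piFinset (fun _ : Fin p => A) with hF
  set w : Finset (Fin m' × Fin n') → ℝ :=
    fun b => if (b.image Prod.fst).card ≤ s then q^((b.image Prod.fst).card + b.card) else 0
    with hw
  have hw0 : ∀ b, 0 ≤ w b := by
    intro b; rw [hw]; dsimp only; split_ifs
    · positivity
    · exact le_refl 0
  have step1 : ∑ f ∈ F, w (Finset.univ.image f)
      = ∑ b ∈ F.image (fun f => Finset.univ.image f),
          (F.filter (fun f => Finset.univ.image f = b)).card • w b :=
    Finset.sum_comp w (fun f => Finset.univ.image f)
  have step2 : ∀ b, (F.filter (fun f => Finset.univ.image f = b)).card • w b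
      ≤ (b.card:ℝ)^p * w b := by
    intro b
    have hcard : (F.filter (fun f => Finset.univ.image f = b)).card ≤ b.card ^ p := by
      have hsub : F.filter (fun f => Finset.univ.image f = b)
          ⊆ Fintype.piFinset (fun _ : Fin p => b) := by
        intro f hf
        rw [Finset.mem_filter] at hf
        rw [Fintype.mem_piFinset]
        intro k
        rw [← hf.2]
        exact Finset.mem_image_of_mem f (Finset.mem_univ k)
      calc (F.filter (fun f => Finset.univ.image f = b)).card
          ≤ (Fintype.piFinset (fun _ : Fin p => b)).card := Finset.card_le_card hsub
        _ = ∏ _k : Fin p, b.card := Fintype.card_piFinset _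
        _ = b.card ^ p := by rw [Finset.prod_const, Finset.card_univ, Fintype.card_fin]
    have hc : ((F.filter (fun f => Finset.univ.image f = b)).card : ℝ) ≤ (b.card:ℝ)^p := by
      exact_mod_cast hcard
    rw [nsmul_eq_mul]
    exact mul_le_mul_of_nonneg_right hc (hw0 b)
  -- define SS
  set SS : Finset (Finset (Fin m' × Fin n')) :=
    (A.powerset.filter (fun b => 1 ≤ b.card ∧ b.card ≤ p)) with hSS
  have step3 : F.image (fun f => Finset.univ.image f) ⊆ SS := by
    intro b hb
    obtain ⟨f, hf, rfl⟩ := Finset.mem_image.mp hb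
    rw [hSS, Finset.mem_filter, Finset.mem_powerset]
    refine ⟨?_, ?_, ?_⟩
    · intro a ha
      obtain ⟨k, _, rfl⟩ := Finset.mem_image.mp ha
      rw [hF] at hf
      exact Fintype.mem_piFinset.mp hf k
    · have hne : (Finset.univ.image f).Nonempty := by
        refine ⟨f ⟨0, hp⟩, Finset.mem_image_of_mem f (Finset.mem_univ _)⟩
      exact Finset.card_pos.mpr hne
    · calc (Finset.univ.image f).card ≤ (Finset.univ : Finset (Fin p)).card :=
          Finset.card_image_le
        _ = p := by rw [Finset.card_univ, Fintype.card_fin]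
  have hterm0 : ∀ b, (0:ℝ) ≤ (b.card:ℝ)^p * w b :=
    fun b => mul_nonneg (by positivity) (hw0 b)
  have step4 : ∑ b ∈ F.image (fun f => Finset.univ.image f), (b.card:ℝ)^p * w b
      ≤ ∑ b ∈ SS, (b.card:ℝ)^p * w b :=
    Finset.sum_le_sum_of_subset_of_nonneg step3 (fun b _ _ => hterm0 b)
  -- fiberwise over L = image fst
  have step5 : ∑ b ∈ SS, (b.card:ℝ)^p * w b
      = ∑ L ∈ (Finset.univ : Finset (Fin m')).powerset,
          ∑ b ∈ SS.filter (fun b => b.image Prod.fst = L), (b.card:ℝ)^p * w b := by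
    exact (Finset.sum_fiberwise_of_maps_to
      (fun b _ => Finset.mem_powerset.mpr (Finset.subset_univ _)) _).symm
  -- per L bound
  have step6 : ∀ L ∈ (Finset.univ : Finset (Fin m')).powerset,
      ∑ b ∈ SS.filter (fun b => b.image Prod.fst = L), (b.card:ℝ)^p * w b
      ≤ (if L.card ≤ s then q^(L.card) *
          (∑ k ∈ Finset.range (L.card*J.card+1), (((L.card*J.card).choose k : ℕ) : ℝ) *
            (if (1 ≤ k ∧ L.card ≤ k ∧ k ≤ p) then (k:ℝ)^p * q^k else 0)) else 0) := by
    intro L _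
    set φ : ℕ → ℝ := fun k => if (1 ≤ k ∧ L.card ≤ k ∧ k ≤ p)
      then ((k:ℝ)^p * (if L.card ≤ s then q^(L.card + k) else 0)) else 0 with hφ
    have hφ0 : ∀ k, 0 ≤ φ k := by
      intro k; rw [hφ]; dsimp only; split_ifs
      · positivity
      · positivity
      · exact le_refl 0
    have h6a : ∑ b ∈ SS.filter (fun b => b.image Prod.fst = L), (b.card:ℝ)^p * w b
        = ∑ b ∈ SS.filter (fun b => b.image Prod.fst = L), φ b.card := by
      refine Finset.sum_congr rfl (fun b hb => ?_)
      rw [Finset.mem_filter] at hb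
      obtain ⟨hbSS, hbL⟩ := hb
      rw [hSS, Finset.mem_filter] at hbSS
      obtain ⟨_, hb1, hbp⟩ := hbSS
      have hLb : L.card ≤ b.card := by
        rw [← hbL]; exact Finset.card_image_le
      rw [hφ, hw]
      dsimp only
      rw [hbL, if_pos (show 1 ≤ b.card ∧ L.card ≤ b.card ∧ b.card ≤ p from ⟨hb1, hLb, hbp⟩)]
    have h6b : SS.filter (fun b => b.image Prod.fst = L) ⊆ (L ×ˢ J).powerset := by
      intro b hb
      rw [Finset.mem_filter] at hb
      obtain ⟨hbSS, hbL⟩ := hb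
      rw [hSS, Finset.mem_filter, Finset.mem_powerset] at hbSS
      rw [Finset.mem_powerset]
      intro a ha
      rw [Finset.mem_product]
      constructor
      · rw [← hbL]; exact Finset.mem_image_of_mem Prod.fst ha
      · have := hbSS.1 ha
        rw [hA, Finset.mem_product] at this
        exact this.2
    have h6c : ∑ b ∈ SS.filter (fun b => b.image Prod.fst = L), φ b.card
        ≤ ∑ b ∈ (L ×ˢ J).powerset, φ b.card :=
      Finset.sum_le_sum_of_subset_of_nonneg h6b (fun b _ _ => hφ0 _)
    have h6d : ∑ b ∈ (L ×ˢ J).powerset, φ b.card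
        = ∑ k ∈ Finset.range (L.card * J.card + 1), ((L.card * J.card).choose k) • φ k := by
      rw [Finset.sum_powerset_apply_card, Finset.card_product]
    have h6e : ∑ k ∈ Finset.range (L.card * J.card + 1), ((L.card * J.card).choose k) • φ k
        ≤ (if L.card ≤ s then q^(L.card) *
          (∑ k ∈ Finset.range (L.card*J.card+1), (((L.card*J.card).choose k : ℕ) : ℝ) *
            (if (1 ≤ k ∧ L.card ≤ k ∧ k ≤ p) then (k:ℝ)^p * q^k else 0)) else 0) := by
      by_cases hLs : L.card ≤ s
      · rw [if_pos hLs]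
        rw [Finset.mul_sum]
        refine le_of_eq (Finset.sum_congr rfl (fun k _ => ?_))
        rw [hφ, nsmul_eq_mul]
        dsimp only
        split_ifs with h1
        · rw [pow_add]; ring
        · ring
      · have : ∀ k ∈ Finset.range (L.card * J.card + 1), ((L.card * J.card).choose k) • φ k = 0 := by
          intro k _
          rw [hφ]
          dsimp only
          rw [if_neg hLs]
          split_ifs
          · rw [mul_zero, smul_zero]
          · rw [smul_zero]
        rw [Finset.sum_congr rfl this, Finset.sum_const, smul_zero, if_neg hLs]
    calc ∑ b ∈ SS.filter (fun b => b.image Prod.fst = L), (b.card:ℝ)^p * w b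
        = ∑ b ∈ SS.filter (fun b => b.image Prod.fst = L), φ b.card := h6a
      _ ≤ ∑ b ∈ (L ×ˢ J).powerset, φ b.card := h6c
      _ = ∑ k ∈ Finset.range (L.card * J.card + 1), ((L.card * J.card).choose k) • φ k := h6d
      _ ≤ _ := h6e
  -- collapse outer
  have step7 : ∑ L ∈ (Finset.univ : Finset (Fin m')).powerset,
      (if L.card ≤ s then q^(L.card) *
          (∑ k ∈ Finset.range (L.card*J.card+1), (((L.card*J.card).choose k : ℕ) : ℝ) *
            (if (1 ≤ k ∧ L.card ≤ k ∧ k ≤ p) then (k:ℝ)^p * q^k else 0)) else 0)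
      = ∑ l ∈ Finset.range (m'+1), (m'.choose l : ℝ) *
        (if l ≤ s then q^l * (∑ k ∈ Finset.range (l*J.card+1), (((l*J.card).choose k : ℕ) : ℝ) *
          (if (1 ≤ k ∧ l ≤ k ∧ k ≤ p) then (k:ℝ)^p * q^k else 0)) else 0) := by
    rw [Finset.sum_powerset_apply_card (fun l => (if l ≤ s then q^l *
      (∑ k ∈ Finset.range (l*J.card+1), (((l*J.card).choose k : ℕ) : ℝ) *
        (if (1 ≤ k ∧ l ≤ k ∧ k ≤ p) then (k:ℝ)^p * q^k else 0)) else 0))]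
    rw [Finset.card_univ, Fintype.card_fin]
    refine Finset.sum_congr rfl (fun l _ => ?_)
    rw [nsmul_eq_mul]
  calc ∑ f ∈ F, w (Finset.univ.image f)
      = ∑ b ∈ F.image (fun f => Finset.univ.image f),
          (F.filter (fun f => Finset.univ.image f = b)).card • w b := step1
    _ ≤ ∑ b ∈ F.image (fun f => Finset.univ.image f), (b.card:ℝ)^p * w b :=
        Finset.sum_le_sum (fun b _ => step2 b)
    _ ≤ ∑ b ∈ SS, (b.card:ℝ)^p * w b := step4
    _ = ∑ L ∈ (Finset.univ : Finset (Fin m')).powerset,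
          ∑ b ∈ SS.filter (fun b => b.image Prod.fst = L), (b.card:ℝ)^p * w b := step5
    _ ≤ ∑ L ∈ (Finset.univ : Finset (Fin m')).powerset,
        (if L.card ≤ s then q^(L.card) *
          (∑ k ∈ Finset.range (L.card*J.card+1), (((L.card*J.card).choose k : ℕ) : ℝ) *
            (if (1 ≤ k ∧ L.card ≤ k ∧ k ≤ p) then (k:ℝ)^p * q^k else 0)) else 0) :=
        Finset.sum_le_sum step6
    _ = _ := step7

section PerTuple
variable {Ω : Type} [MeasureSpace Ω] [IsProbabilityMeasure (ℙ : Measure Ω)] {n m s : ℕ}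

lemma eta_nn (c : EtaSSCJL Ω n m s) (r : Fin m) (i : Fin n) (ω : Ω) : 0 ≤ c.η r i ω := by
  rcases c.eta01 r i ω with h | h <;> rw [h] <;> norm_num

lemma eta_le1 (c : EtaSSCJL Ω n m s) (r : Fin m) (i : Fin n) (ω : Ω) : c.η r i ω ≤ 1 := by
  rcases c.eta01 r i ω with h | h <;> rw [h] <;> norm_num

lemma per_tuple (c : EtaSSCJL Ω n m s) (i : Fin n) (p : ℕ)
    (f : Fin p → Fin m × Fin n) (hfi : ∀ k, (f k).2 ≠ i) :
    ∫ ω, ∏ k, (c.η (f k).1 i ω * c.η (f k).1 (f k).2 ω)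
      ≤ (if (((Finset.univ.image f).image Prod.fst).card ≤ s)
          then ((s:ℝ)/m)^((((Finset.univ.image f).image Prod.fst).card) + (Finset.univ.image f).card)
          else 0) := by
  classical
  set Pf : Finset (Fin m × Fin n) := Finset.univ.image f with hPf
  set Rf : Finset (Fin m) := Pf.image Prod.fst with hRf
  by_cases hls : Rf.card ≤ s
  · rw [if_pos hls]
    -- column fiber sets
    set T : Fin n → Finset (Fin m) :=
      fun jj => if jj = i then Rf else (Pf.filter (fun a => a.2 = jj)).image Prod.fst with hT
    set G : Fin n → Ω → ℝ := fun jj ω => ∏ r ∈ T jj, c.η r jj ω with hG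
    set Cf : Finset (Fin n) := Pf.image Prod.snd with hCf
    have hiCf : i ∉ Cf := by
      intro hmem
      rw [hCf] at hmem
      obtain ⟨a, ha, hai⟩ := Finset.mem_image.mp hmem
      rw [hPf] at ha
      obtain ⟨k, _, hk⟩ := Finset.mem_image.mp ha
      exact hfi k (by rw [hk, hai])
    -- pointwise identity
    have hpoint : ∀ ω, ∏ k, (c.η (f k).1 i ω * c.η (f k).1 (f k).2 ω)
        = ∏ jj ∈ insert i Cf, G jj ω := by
      intro ω
      set v : Fin m × Fin n → ℝ := fun a => c.η a.1 a.2 ω with hv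
      have hv01 : ∀ a, v a = 0 ∨ v a = 1 := fun a => c.eta01 a.1 a.2 ω
      have e1 : ∏ k, (c.η (f k).1 i ω * c.η (f k).1 (f k).2 ω)
          = (∏ k, v ((f k).1, i)) * ∏ k, v (f k) := by
        rw [← Finset.prod_mul_distrib]
      have e2 : (∏ k, v ((f k).1, i)) = ∏ r ∈ Rf, c.η r i ω := by
        have h1 : (∏ k, v ((f k).1, i))
            = ∏ b ∈ Finset.univ.image (fun k => ((f k).1, i)), v b :=
          prod_image_idem _ _ _ hv01
        have h2 : Finset.univ.image (fun k : Fin p => ((f k).1, i))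
            = Rf.image (fun r => (r, i)) := by
          rw [hRf, hPf, Finset.image_image, Finset.image_image]
          rfl
        rw [h1, h2, Finset.prod_image (fun a _ b _ hab => by
          simpa using congrArg Prod.fst hab)]
      have e3 : (∏ k, v (f k)) = ∏ jj ∈ Cf, G jj ω := by
        have h1 : (∏ k, v (f k)) = ∏ b ∈ Pf, v b := by
          rw [hPf]; exact prod_image_idem _ _ _ hv01
        have h2 : ∏ b ∈ Pf, v b = ∏ jj ∈ Cf, ∏ b ∈ Pf.filter (fun a => a.2 = jj), v b := by
          rw [hCf]
          exact (Finset.prod_fiberwise_of_maps_to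
            (fun a ha => Finset.mem_image_of_mem Prod.snd ha) v).symm
        have h3 : ∀ jj ∈ Cf, (∏ b ∈ Pf.filter (fun a => a.2 = jj), v b) = G jj ω := by
          intro jj hjj
          have hjji : jj ≠ i := by
            intro h
            exact hiCf (h ▸ hjj)
          rw [hG, hT]
          simp only [if_neg hjji]
          rw [Finset.prod_image (fun a ha b hb hab => by
            have ha2 := (Finset.mem_filter.mp ha).2
            have hb2 := (Finset.mem_filter.mp hb).2
            exact Prod.ext hab (ha2.trans hb2.symm))]
          refine Finset.prod_congr rfl (fun a ha => ?_)
          have ha2 := (Finset.mem_filter.mp ha).2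
          rw [hv]
          simp only
          rw [ha2]
        rw [h1, h2]
        exact Finset.prod_congr rfl h3
      rw [e1, e2, e3, Finset.prod_insert hiCf]
      congr 1
      rw [hG, hT]
      simp
    -- independence
    have hGmeas : ∀ jj, Measurable (G jj) := by
      intro jj
      rw [hG]
      exact Finset.measurable_prod _ (fun r _ => c.meas_eta r jj)
    have hGbd : ∀ jj ω, |G jj ω| ≤ 1 := by
      intro jj ω
      rw [hG]
      simp only
      rw [Finset.abs_prod]
      exact Finset.prod_le_one (fun r _ => abs_nonneg _)
        (fun r _ => by rw [abs_of_nonneg (eta_nn c r jj ω)]; exact eta_le1 c r jj ω)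
    have hGind : iIndepFun G ℙ := by
      have := c.cols_indep.comp (fun jj (vv : Fin m → ℝ) => ∏ r ∈ T jj, vv r)
        (fun jj => Finset.measurable_prod _ (fun r _ => measurable_pi_apply r))
      convert this using 1
      rfl
    have hsplit : ∫ ω, ∏ jj ∈ insert i Cf, G jj ω = ∏ jj ∈ insert i Cf, ∫ ω, G jj ω :=
      integral_prod_indep G hGind hGmeas hGbd _
    -- bound each factor
    have hfact : ∀ jj ∈ insert i Cf, ∫ ω, G jj ω ≤ ((s:ℝ)/m)^(T jj).card := by
      intro jj _
      rw [hG]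
      exact c.neg_corr (T jj) jj
    have hfact0 : ∀ jj ∈ insert i Cf, 0 ≤ ∫ ω, G jj ω := by
      intro jj _
      rw [hG]
      exact integral_nonneg (fun ω => Finset.prod_nonneg (fun r _ => eta_nn c r jj ω))
    have hqnn : (0:ℝ) ≤ (s:ℝ)/m := by positivity
    have hcards : ∑ jj ∈ insert i Cf, (T jj).card = Rf.card + Pf.card := by
      rw [Finset.sum_insert hiCf]
      congr 1
      · rw [hT]; simp
      · have hfib : ∑ jj ∈ Cf, (T jj).card = ∑ jj ∈ Cf, (Pf.filter (fun a => a.2 = jj)).card := by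
          refine Finset.sum_congr rfl (fun jj hjj => ?_)
          have hjji : jj ≠ i := fun h => hiCf (h ▸ hjj)
          rw [hT]
          simp only [if_neg hjji]
          exact Finset.card_image_of_injOn (fun a ha b hb hab =>
            Prod.ext hab ((Finset.mem_filter.mp ha).2.trans ((Finset.mem_filter.mp hb).2).symm))
        rw [hfib, hCf]
        exact (Finset.card_eq_sum_card_fiberwise
          (fun a ha => Finset.mem_image_of_mem Prod.snd ha)).symm
    calc ∫ ω, ∏ k, (c.η (f k).1 i ω * c.η (f k).1 (f k).2 ω)
        = ∫ ω, ∏ jj ∈ insert i Cf, G jj ω := by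
          congr 1; funext ω; exact hpoint ω
      _ = ∏ jj ∈ insert i Cf, ∫ ω, G jj ω := hsplit
      _ ≤ ∏ jj ∈ insert i Cf, ((s:ℝ)/m)^(T jj).card :=
          Finset.prod_le_prod hfact0 hfact
      _ = ((s:ℝ)/m)^(∑ jj ∈ insert i Cf, (T jj).card) := Finset.prod_pow_eq_pow_sum _ _ _
      _ = ((s:ℝ)/m)^(Rf.card + Pf.card) := by rw [hcards]
  · rw [if_neg hls]
    push_neg at hls
    have hzero : ∀ᵐ ω : Ω, (∏ k, (c.η (f k).1 i ω * c.η (f k).1 (f k).2 ω)) = 0 := by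
      filter_upwards [c.col_sum i] with ω hω
      by_contra hne
      have hfac : ∀ k : Fin p, c.η (f k).1 i ω * c.η (f k).1 (f k).2 ω ≠ 0 := by
        intro k
        exact Finset.prod_ne_zero_iff.mp hne k (Finset.mem_univ k)
      have hone : ∀ r ∈ Rf, c.η r i ω = 1 := by
        intro r hr
        rw [hRf] at hr
        obtain ⟨a, ha, har⟩ := Finset.mem_image.mp hr
        rw [hPf] at ha
        obtain ⟨k, _, hk⟩ := Finset.mem_image.mp ha
        have := hfac k
        have hl : c.η (f k).1 i ω ≠ 0 := fun h => this (by rw [h, zero_mul])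
        rcases c.eta01 (f k).1 i ω with h | h
        · exact absurd h hl
        · rw [← har, ← hk]; exact h
      have hsum : (s:ℝ) < ∑ r, c.η r i ω := by
        calc (s:ℝ) < (Rf.card : ℝ) := by exact_mod_cast hls
          _ = ∑ r ∈ Rf, c.η r i ω := by
            rw [Finset.sum_congr rfl hone, Finset.sum_const, nsmul_eq_mul, mul_one]
          _ ≤ ∑ r, c.η r i ω := by
            exact Finset.sum_le_sum_of_subset_of_nonneg (Finset.subset_univ Rf)
              (fun r _ _ => eta_nn c r i ω)
      rw [hω] at hsum
      exact lt_irrefl _ hsum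
    have : ∫ ω, ∏ k, (c.η (f k).1 i ω * c.η (f k).1 (f k).2 ω) = 0 := by
      rw [integral_congr_ae hzero, integral_zero]
    rw [this]

end PerTuple

theorem sscjl_diagonal_block_bound :
    ∃ C : ℝ, 0 < C ∧
      ∀ (Ω : Type) [MeasureSpace Ω] [IsProbabilityMeasure (ℙ : Measure Ω)]
        (n m s : ℕ), 0 < n → 0 < m → 0 < s → s ≤ m →
        ∀ (c : EtaSSCJL Ω n m s) (x : Fin n → ℝ), (∑ i, x i ^ 2 = 1) →
        (∀ i j : Fin n, i ≤ j → |x j| ≤ |x i|) →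
        ∀ p : ℕ, 2 ≤ p → p ≤ n →
          (Real.exp 1 ≤ (m : ℝ) / s ^ 2 →
            pnorm (fun ω =>
                ∑ i ∈ Finset.univ.filter (fun i : Fin n => (i : ℕ) < p),
                  ∑ j ∈ Finset.univ.filter (fun j : Fin n => (j : ℕ) < p ∧ j ≠ i),
                    |c.Q i j ω * x i * x j|) p
              ≤ C * p / Real.log ((m : ℝ) / s ^ 2)) ∧
          ((m : ℝ) / s ^ 2 < Real.exp 1 →
            pnorm (fun ω =>
                ∑ i ∈ Finset.univ.filter (fun i : Fin n => (i : ℕ) < p),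
                  ∑ j ∈ Finset.univ.filter (fun j : Fin n => (j : ℕ) < p ∧ j ≠ i),
                    |c.Q i j ω * x i * x j|) p
              ≤ C * p / ((m : ℝ) / s ^ 2)) := by
  classical
  refine ⟨Real.exp 6, Real.exp_pos 6, ?_⟩
  intro Ω _ _ n m s hn hm hs hsm c x hx hsort p hp2 hpn
  set q : ℝ := (s:ℝ)/m with hqdef
  have hm0 : (0:ℝ) < m := by exact_mod_cast hm
  have hs0 : (0:ℝ) < s := by exact_mod_cast hs
  have hq0 : (0:ℝ) < q := by rw [hqdef]; positivity
  have ht0 : (0:ℝ) < q * s := by positivity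
  have hp0 : 0 < p := by omega
  have hP0 : (0:ℝ) < (p:ℝ) := by exact_mod_cast hp0
  -- basic eta facts
  have hnn : ∀ r i ω, 0 ≤ c.η r i ω := fun r i ω => eta_nn c r i ω
  have hle1 : ∀ r i ω, c.η r i ω ≤ 1 := fun r i ω => eta_le1 c r i ω
  set P : Finset (Fin n) := Finset.univ.filter (fun i : Fin n => (i : ℕ) < p) with hPdef
  set J : Fin n → Finset (Fin n) :=
    fun i => Finset.univ.filter (fun j : Fin n => (j : ℕ) < p ∧ j ≠ i) with hJdef
  set Y : Ω → ℝ := fun ω => ∑ i ∈ P, ∑ j ∈ J i, |c.Q i j ω * x i * x j| with hYdef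
  set R : Fin n → Ω → ℝ := fun i ω => ∑ j ∈ J i, c.Q i j ω with hRdef
  -- cardinalities
  have cardfin : ∀ (S : Finset (Fin n)), (∀ j ∈ S, (j:ℕ) < p) → S.card ≤ p := by
    intro S hS
    have h1 : S.image Fin.val ⊆ Finset.range p := by
      intro v hv
      obtain ⟨j, hj, rfl⟩ := Finset.mem_image.mp hv
      exact Finset.mem_range.mpr (hS j hj)
    calc S.card = (S.image Fin.val).card :=
          (Finset.card_image_of_injective _ Fin.val_injective).symm
      _ ≤ (Finset.range p).card := Finset.card_le_card h1
      _ = p := Finset.card_range p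
  have hPcard : P.card ≤ p := cardfin P (fun j hj => (Finset.mem_filter.mp hj).2)
  have hJcard : ∀ i, (J i).card ≤ p :=
    fun i => cardfin (J i) (fun j hj => (Finset.mem_filter.mp hj).2.1)
  have hPne : P.Nonempty := by
    refine ⟨⟨0, hn⟩, ?_⟩
    rw [hPdef, Finset.mem_filter]
    exact ⟨Finset.mem_univ _, by simpa using hp0⟩
  -- Q facts
  have hQnn : ∀ i j ω, 0 ≤ c.Q i j ω := by
    intro i j ω
    exact Finset.sum_nonneg (fun r _ => mul_nonneg (hnn r i ω) (hnn r j ω))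
  have hQle : ∀ i j ω, c.Q i j ω ≤ m := by
    intro i j ω
    calc c.Q i j ω ≤ ∑ _r : Fin m, (1:ℝ) :=
          Finset.sum_le_sum (fun r _ => mul_le_one₀ (hle1 r i ω) (hnn r j ω) (hle1 r j ω))
      _ = m := by rw [Finset.sum_const, Finset.card_univ, Fintype.card_fin, nsmul_eq_mul, mul_one]
  have hQsymm : ∀ i j ω, c.Q i j ω = c.Q j i ω := by
    intro i j ω
    unfold EtaSSCJL.Q
    exact Finset.sum_congr rfl (fun r _ => mul_comm _ _)
  have hQmeas : ∀ i j, Measurable (fun ω => c.Q i j ω) := by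
    intro i j
    unfold EtaSSCJL.Q
    exact Finset.measurable_sum _ (fun r _ => (c.meas_eta r i).mul (c.meas_eta r j))
  have hRnn : ∀ i ω, 0 ≤ R i ω :=
    fun i ω => Finset.sum_nonneg (fun j _ => hQnn i j ω)
  have hRmeas : ∀ i, Measurable (R i) :=
    fun i => Finset.measurable_sum _ (fun j _ => hQmeas i j)
  have hRbd : ∀ i ω, R i ω ≤ (p:ℝ) * m := by
    intro i ω
    calc R i ω ≤ ∑ _j ∈ J i, (m:ℝ) := Finset.sum_le_sum (fun j _ => hQle i j ω)
      _ = (J i).card * m := by rw [Finset.sum_const, nsmul_eq_mul]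
      _ ≤ (p:ℝ) * m := by
          have : ((J i).card : ℝ) ≤ (p:ℝ) := by exact_mod_cast hJcard i
          exact mul_le_mul_of_nonneg_right this hm0.le
  have hYnn : ∀ ω, 0 ≤ Y ω :=
    fun ω => Finset.sum_nonneg (fun i _ => Finset.sum_nonneg (fun j _ => abs_nonneg _))
  have hYmeas : Measurable Y := by
    rw [hYdef]
    refine Finset.measurable_sum _ (fun i _ => ?_)
    refine Finset.measurable_sum _ (fun j _ => ?_)
    exact (((hQmeas i j).mul_const (x i)).mul_const (x j)).abs
  -- pointwise bound 1 : Y ≤ ∑ x_i^2 R_i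
  have hJP : ∀ i, J i = P.filter (fun j => j ≠ i) := by
    intro i
    rw [hJdef, hPdef, Finset.filter_filter]
  have point1 : ∀ ω, Y ω ≤ ∑ i ∈ P, x i ^ 2 * R i ω := by
    intro ω
    have hsum2 : ∀ i ∈ P, ∑ j ∈ J i, |c.Q i j ω * x i * x j|
        ≤ ∑ j ∈ J i, c.Q i j ω * ((x i ^ 2 + x j ^ 2) / 2) := by
      intro i _
      refine Finset.sum_le_sum (fun j _ => ?_)
      rw [abs_mul, abs_mul, abs_of_nonneg (hQnn i j ω)]
      have hxx : |x i| * |x j| ≤ (x i ^ 2 + x j ^ 2) / 2 := by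
        nlinarith [sq_nonneg (|x i| - |x j|), sq_abs (x i), sq_abs (x j)]
      calc c.Q i j ω * |x i| * |x j| = c.Q i j ω * (|x i| * |x j|) := by ring
        _ ≤ c.Q i j ω * ((x i ^ 2 + x j ^ 2) / 2) :=
            mul_le_mul_of_nonneg_left hxx (hQnn i j ω)
    have key : ∑ i ∈ P, ∑ j ∈ J i, c.Q i j ω * ((x i ^ 2 + x j ^ 2) / 2)
        = ∑ i ∈ P, x i ^ 2 * R i ω := by
      have hS2 : ∑ i ∈ P, ∑ j ∈ J i, c.Q i j ω * x j ^ 2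
          = ∑ i ∈ P, ∑ j ∈ J i, c.Q i j ω * x i ^ 2 := by
        have e1 : ∀ (F : Fin n → Fin n → ℝ), ∑ i ∈ P, ∑ j ∈ J i, F i j
            = ∑ i ∈ P, ∑ j ∈ P, if j ≠ i then F i j else 0 := by
          intro F
          refine Finset.sum_congr rfl (fun i _ => ?_)
          rw [hJP i, Finset.sum_filter]
        rw [e1, e1, Finset.sum_comm]
        refine Finset.sum_congr rfl (fun i _ => Finset.sum_congr rfl (fun j _ => ?_))
        by_cases h : i ≠ j
        · rw [if_pos h, if_pos (Ne.symm h), hQsymm i j ω]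
        · push_neg at h
          rw [h]
      calc ∑ i ∈ P, ∑ j ∈ J i, c.Q i j ω * ((x i ^ 2 + x j ^ 2) / 2)
          = (∑ i ∈ P, ∑ j ∈ J i, c.Q i j ω * x i ^ 2) / 2
            + (∑ i ∈ P, ∑ j ∈ J i, c.Q i j ω * x j ^ 2) / 2 := by
            rw [Finset.sum_div, Finset.sum_div, ← Finset.sum_add_distrib]
            refine Finset.sum_congr rfl (fun i _ => ?_)
            rw [Finset.sum_div, Finset.sum_div, ← Finset.sum_add_distrib]
            exact Finset.sum_congr rfl (fun j _ => by ring)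
        _ = ∑ i ∈ P, ∑ j ∈ J i, c.Q i j ω * x i ^ 2 := by rw [hS2]; ring
        _ = ∑ i ∈ P, x i ^ 2 * R i ω := by
            refine Finset.sum_congr rfl (fun i _ => ?_)
            rw [hRdef]
            simp only
            rw [Finset.mul_sum]
            exact Finset.sum_congr rfl (fun j _ => by ring)
    calc Y ω ≤ ∑ i ∈ P, ∑ j ∈ J i, c.Q i j ω * ((x i ^ 2 + x j ^ 2) / 2) :=
          Finset.sum_le_sum hsum2
      _ = ∑ i ∈ P, x i ^ 2 * R i ω := key
  -- pointwise bound 2 : Y^p ≤ ∑ R_i^p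
  have point2 : ∀ ω, Y ω ^ p ≤ ∑ i ∈ P, R i ω ^ p := by
    intro ω
    set M : ℝ := P.sup' hPne (fun i => R i ω) with hM
    have hxsum : ∑ i ∈ P, x i ^ 2 ≤ 1 := by
      rw [← hx]
      exact Finset.sum_le_sum_of_subset_of_nonneg (Finset.subset_univ P)
        (fun i _ _ => sq_nonneg (x i))
    obtain ⟨i0, hi0mem, hi0⟩ := Finset.exists_mem_eq_sup' hPne (fun i => R i ω)
    have hM0 : 0 ≤ M := by rw [hM, hi0]; exact hRnn i0 ω
    have hYM : Y ω ≤ M := by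
      calc Y ω ≤ ∑ i ∈ P, x i ^ 2 * R i ω := point1 ω
        _ ≤ ∑ i ∈ P, x i ^ 2 * M :=
            Finset.sum_le_sum (fun i hi =>
              mul_le_mul_of_nonneg_left (Finset.le_sup' (fun i => R i ω) hi) (sq_nonneg (x i)))
        _ = (∑ i ∈ P, x i ^ 2) * M := by rw [Finset.sum_mul]
        _ ≤ 1 * M := mul_le_mul_of_nonneg_right hxsum hM0
        _ = M := one_mul M
    calc Y ω ^ p ≤ M ^ p := pow_le_pow_left₀ (hYnn ω) hYM p
      _ = R i0 ω ^ p := by rw [hM, hi0]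
      _ ≤ ∑ i ∈ P, R i ω ^ p :=
          Finset.single_le_sum (fun i _ => pow_nonneg (hRnn i ω) p) hi0mem
  -- integrability
  have integrable_of_bdd : ∀ (g : Ω → ℝ) (K : ℝ), Measurable g → (∀ ω, |g ω| ≤ K) →
      Integrable g ℙ := by
    intro g K hgm hgK
    refine (integrable_const K).mono' hgm.aestronglyMeasurable ?_
    exact Filter.Eventually.of_forall (fun ω => by rw [Real.norm_eq_abs]; exact hgK ω)
  have hintRp : ∀ i, Integrable (fun ω => R i ω ^ p) ℙ := by
    intro i
    refine integrable_of_bdd _ (((p:ℝ)*m)^p) ((hRmeas i).pow_const p) (fun ω => ?_)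
    rw [abs_of_nonneg (pow_nonneg (hRnn i ω) p)]
    exact pow_le_pow_left₀ (hRnn i ω) (hRbd i ω) p
  have hintYp : Integrable (fun ω => Y ω ^ p) ℙ := by
    have hYbd : ∀ ω, Y ω ≤ (p:ℝ) * m := by
      intro ω
      calc Y ω ≤ ∑ i ∈ P, x i ^ 2 * R i ω := point1 ω
        _ ≤ ∑ i ∈ P, x i ^ 2 * ((p:ℝ) * m) :=
            Finset.sum_le_sum (fun i _ =>
              mul_le_mul_of_nonneg_left (hRbd i ω) (sq_nonneg (x i)))
        _ = (∑ i ∈ P, x i ^ 2) * ((p:ℝ) * m) := by rw [Finset.sum_mul]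
        _ ≤ 1 * ((p:ℝ) * m) := by
            refine mul_le_mul_of_nonneg_right ?_ (by positivity)
            rw [← hx]
            exact Finset.sum_le_sum_of_subset_of_nonneg (Finset.subset_univ P)
              (fun i _ _ => sq_nonneg (x i))
        _ = (p:ℝ) * m := one_mul _
    refine integrable_of_bdd _ (((p:ℝ) * m)^p) (hYmeas.pow_const p) (fun ω => ?_)
    rw [abs_of_nonneg (pow_nonneg (hYnn ω) p)]
    exact pow_le_pow_left₀ (hYnn ω) (hYbd ω) p
  -- the per-column moment bound
  have percol : ∀ i ∈ P, ∫ ω, R i ω ^ p ≤ (p:ℝ) * ((p:ℝ) * Bnd p (q * s)) := by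
    intro i _
    set A : Finset (Fin m × Fin n) := (Finset.univ : Finset (Fin m)) ×ˢ J i with hA
    have hRsum : ∀ ω, R i ω = ∑ a ∈ A, c.η a.1 i ω * c.η a.1 a.2 ω := by
      intro ω
      rw [hRdef]
      simp only
      rw [hA, Finset.sum_product]
      rw [Finset.sum_comm]
      refine Finset.sum_congr rfl (fun j _ => ?_)
      rfl
    have hpow : ∀ ω, R i ω ^ p = ∑ f ∈ Fintype.piFinset (fun _ : Fin p => A),
        ∏ k : Fin p, (c.η (f k).1 i ω * c.η (f k).1 (f k).2 ω) := by
      intro ω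
      rw [hRsum ω]
      rw [show ((∑ a ∈ A, c.η a.1 i ω * c.η a.1 a.2 ω) ^ p)
          = ∏ _k : Fin p, (∑ a ∈ A, c.η a.1 i ω * c.η a.1 a.2 ω) from by
        rw [Finset.prod_const, Finset.card_univ, Fintype.card_fin]]
      rw [Finset.prod_univ_sum]
    have hintf : ∀ f : Fin p → Fin m × Fin n,
        Integrable (fun ω => ∏ k : Fin p, (c.η (f k).1 i ω * c.η (f k).1 (f k).2 ω)) ℙ := by
      intro f
      refine integrable_of_bdd _ 1 ?_ (fun ω => ?_)
      · exact Finset.measurable_prod _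
          (fun k _ => (c.meas_eta (f k).1 i).mul (c.meas_eta (f k).1 (f k).2))
      · rw [Finset.abs_prod]
        refine Finset.prod_le_one (fun k _ => abs_nonneg _) (fun k _ => ?_)
        rw [abs_of_nonneg (mul_nonneg (hnn _ _ _) (hnn _ _ _))]
        exact mul_le_one₀ (hle1 _ _ _) (hnn _ _ _) (hle1 _ _ _)
    have hswap : ∫ ω, R i ω ^ p = ∑ f ∈ Fintype.piFinset (fun _ : Fin p => A),
        ∫ ω, ∏ k : Fin p, (c.η (f k).1 i ω * c.η (f k).1 (f k).2 ω) := by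
      rw [show (fun ω => R i ω ^ p) = (fun ω => ∑ f ∈ Fintype.piFinset (fun _ : Fin p => A),
        ∏ k : Fin p, (c.η (f k).1 i ω * c.η (f k).1 (f k).2 ω)) from funext hpow]
      exact integral_finset_sum _ (fun f _ => hintf f)
    have hfcol : ∀ f ∈ Fintype.piFinset (fun _ : Fin p => A), ∀ k : Fin p, (f k).2 ≠ i := by
      intro f hf k
      have := Fintype.mem_piFinset.mp hf k
      rw [hA, Finset.mem_product] at this
      have hj := this.2
      rw [hJdef, Finset.mem_filter] at hj
      exact hj.2.2
    have hbound : ∫ ω, R i ω ^ p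
        ≤ ∑ f ∈ Fintype.piFinset (fun _ : Fin p => A),
          (if (((Finset.univ.image f).image Prod.fst).card ≤ s)
            then ((s:ℝ)/m)^((((Finset.univ.image f).image Prod.fst).card)
              + (Finset.univ.image f).card)
            else 0) := by
      rw [hswap]
      exact Finset.sum_le_sum (fun f hf => per_tuple c i p f (hfcol f hf))
    have hcount := counting (m' := m) (n' := n) p s hp0 (J i) ((s:ℝ)/m) (by positivity)
    have hfinal := final_sum p s m ((J i).card) hp2 hs hsm (hJcard i)
    calc ∫ ω, R i ω ^ p
        ≤ ∑ f ∈ Fintype.piFinset (fun _ : Fin p => A),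
          (if (((Finset.univ.image f).image Prod.fst).card ≤ s)
            then ((s:ℝ)/m)^((((Finset.univ.image f).image Prod.fst).card)
              + (Finset.univ.image f).card)
            else 0) := hbound
      _ ≤ ∑ l ∈ Finset.range (m+1), (m.choose l : ℝ) *
          (if l ≤ s then ((s:ℝ)/m)^l * (∑ k ∈ Finset.range (l*(J i).card+1),
            (((l*(J i).card).choose k : ℕ) : ℝ) *
            (if (1 ≤ k ∧ l ≤ k ∧ k ≤ p) then (k:ℝ)^p * ((s:ℝ)/m)^k else 0)) else 0) := hcount
      _ ≤ (p:ℝ) * ((p:ℝ) * Bnd p ((s:ℝ)/m * s)) := hfinal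
      _ = (p:ℝ) * ((p:ℝ) * Bnd p (q * s)) := by rw [hqdef]
  -- master bound
  have master : ∫ ω, Y ω ^ p ≤ (p:ℝ) * ((p:ℝ) * ((p:ℝ) * Bnd p (q * s))) := by
    have hBnn : 0 ≤ Bnd p (q * s) := Bnd_nonneg p _ ht0
    calc ∫ ω, Y ω ^ p ≤ ∫ ω, ∑ i ∈ P, R i ω ^ p := by
          refine integral_mono hintYp ?_ (fun ω => point2 ω)
          exact integrable_finset_sum P (fun i _ => hintRp i)
      _ = ∑ i ∈ P, ∫ ω, R i ω ^ p := integral_finset_sum _ (fun i _ => hintRp i)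
      _ ≤ ∑ _i ∈ P, (p:ℝ) * ((p:ℝ) * Bnd p (q * s)) := Finset.sum_le_sum percol
      _ = (P.card : ℝ) * ((p:ℝ) * ((p:ℝ) * Bnd p (q * s))) := by
          rw [Finset.sum_const, nsmul_eq_mul]
      _ ≤ (p:ℝ) * ((p:ℝ) * ((p:ℝ) * Bnd p (q * s))) := by
          refine mul_le_mul_of_nonneg_right ?_ (by positivity)
          exact_mod_cast hPcard
  -- convert integral of rpow
  have hYrpow : (∫ ω, |Y ω| ^ (p:ℝ)) = ∫ ω, Y ω ^ p := by
    congr 1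
    funext ω
    rw [abs_of_nonneg (hYnn ω), Real.rpow_natCast]
  have hIY0 : 0 ≤ ∫ ω, Y ω ^ p :=
    integral_nonneg (fun ω => pow_nonneg (hYnn ω) p)
  have hpcube : (p:ℝ) * ((p:ℝ) * (p:ℝ)) ≤ (Real.exp 3) ^ p := by
    have h1 : (p:ℝ) ≤ Real.exp p := by
      have := Real.add_one_le_exp (p:ℝ)
      linarith
    have h2 : Real.exp (p:ℝ) ^ 3 = (Real.exp 3) ^ p := by
      rw [← Real.exp_nat_mul, ← Real.exp_nat_mul]
      ring_nf
    calc (p:ℝ) * ((p:ℝ) * (p:ℝ)) = (p:ℝ)^3 := by ring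
      _ ≤ (Real.exp (p:ℝ))^3 := by
          refine pow_le_pow_left₀ (by positivity) h1 3
      _ = (Real.exp 3) ^ p := h2
  have hexp36 : Real.exp 3 * Real.exp 3 = Real.exp 6 := by
    rw [← Real.exp_add]; norm_num
  -- the generic rpow extraction
  have extract : ∀ (X : ℝ), 0 ≤ X → (∫ ω, Y ω ^ p) ≤ (Real.exp 3 * X) ^ p →
      (∫ ω, |Y ω| ^ (p:ℝ)) ^ (1/(p:ℝ)) ≤ Real.exp 3 * X := by
    intro X hX hle
    rw [hYrpow]
    have hXp : (0:ℝ) ≤ Real.exp 3 * X := by positivity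
    calc (∫ ω, Y ω ^ p) ^ (1/(p:ℝ)) ≤ ((Real.exp 3 * X) ^ p) ^ (1/(p:ℝ)) := by
          exact Real.rpow_le_rpow hIY0 hle (by positivity)
      _ = Real.exp 3 * X := by
          rw [← Real.rpow_natCast (Real.exp 3 * X) p, ← Real.rpow_mul hXp]
          rw [mul_one_div, div_self (by exact_mod_cast hp0.ne' : (p:ℝ) ≠ 0), Real.rpow_one]
  have hts : q * s = 1 / ((m:ℝ)/ s^2) := by
    rw [hqdef]; field_simp
  have hB0 : (0:ℝ) < (m:ℝ)/s^2 := by positivity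
  constructor
  · -- case B ≥ e
    intro hB
    have htle : q * s ≤ Real.exp (-1) := by
      rw [hts, Real.exp_neg, ← one_div]
      exact one_div_le_one_div_of_le (Real.exp_pos 1) hB
    have hlogB : (1:ℝ) ≤ Real.log ((m:ℝ)/s^2) := by
      rw [← Real.log_exp 1]
      exact Real.log_le_log (Real.exp_pos 1) hB
    have hlog0 : (0:ℝ) < Real.log ((m:ℝ)/s^2) := by linarith
    have hBndeq : Bnd p (q*s) = (Real.exp 3 * p / Real.log ((m:ℝ)/s^2))^p := by
      unfold Bnd
      rw [if_pos htle]
      rw [hts, one_div_one_div]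
    have hXnn : 0 ≤ Real.exp 3 * p / Real.log ((m:ℝ)/s^2) := by positivity
    have hchain : ∫ ω, Y ω ^ p
        ≤ (Real.exp 3 * (Real.exp 3 * p / Real.log ((m:ℝ)/s^2)))^p := by
      calc ∫ ω, Y ω ^ p ≤ (p:ℝ) * ((p:ℝ) * ((p:ℝ) * Bnd p (q*s))) := master
        _ = ((p:ℝ) * ((p:ℝ) * (p:ℝ))) * Bnd p (q*s) := by ring
        _ ≤ (Real.exp 3)^p * Bnd p (q*s) :=
            mul_le_mul_of_nonneg_right hpcube (Bnd_nonneg p _ ht0)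
        _ = (Real.exp 3)^p * (Real.exp 3 * p / Real.log ((m:ℝ)/s^2))^p := by rw [hBndeq]
        _ = (Real.exp 3 * (Real.exp 3 * p / Real.log ((m:ℝ)/s^2)))^p := (mul_pow _ _ _).symm
    have hfin := extract _ hXnn hchain
    calc pnorm Y (p:ℝ) = (∫ ω, |Y ω| ^ ((p:ℕ):ℝ)) ^ (1/((p:ℕ):ℝ)) := rfl
      _ ≤ Real.exp 3 * (Real.exp 3 * p / Real.log ((m:ℝ)/s^2)) := hfin
      _ = Real.exp 6 * p / Real.log ((m:ℝ)/s^2) := by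
          rw [← hexp36]; ring
  · -- case B < e
    intro hB
    have htgt : Real.exp (-1) < q * s := by
      rw [hts, Real.exp_neg, ← one_div]
      exact one_div_lt_one_div_of_lt hB0 hB
    have hBndeq : Bnd p (q*s) = (Real.exp 3 * p * (q*s))^p := by
      unfold Bnd
      rw [if_neg (not_le.mpr htgt)]
    have hXnn : 0 ≤ Real.exp 3 * p * (q*s) := by positivity
    have hchain : ∫ ω, Y ω ^ p
        ≤ (Real.exp 3 * (Real.exp 3 * p * (q*s)))^p := by
      calc ∫ ω, Y ω ^ p ≤ (p:ℝ) * ((p:ℝ) * ((p:ℝ) * Bnd p (q*s))) := master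
        _ = ((p:ℝ) * ((p:ℝ) * (p:ℝ))) * Bnd p (q*s) := by ring
        _ ≤ (Real.exp 3)^p * Bnd p (q*s) :=
            mul_le_mul_of_nonneg_right hpcube (Bnd_nonneg p _ ht0)
        _ = (Real.exp 3)^p * (Real.exp 3 * p * (q*s))^p := by rw [hBndeq]
        _ = (Real.exp 3 * (Real.exp 3 * p * (q*s)))^p := (mul_pow _ _ _).symm
    have hfin := extract (Real.exp 3 * p * (q*s)) hXnn hchain
    calc pnorm Y (p:ℝ) = (∫ ω, |Y ω| ^ ((p:ℕ):ℝ)) ^ (1/((p:ℕ):ℝ)) := rfl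
      _ ≤ Real.exp 3 * (Real.exp 3 * p * (q*s)) := hfin
      _ = Real.exp 6 * p / ((m:ℝ)/s^2) := by
          rw [← hexp36, hts]; ring
end

section
/- In the sparse sign-consistent JL construction with per-column uniform supports, let x = (1/√2, 1/√2, 0, …, 0) ∈ ℝⁿ (with n ≥ 2), and for an even integer p ≥ 2 define U_p := ‖ √p·√( ∑_{i=1}^n ∑_{j≤n, j≠i} Q_{i,j}² x_i² x_j² ) + p·sup_{‖y‖₂=1} |∑_{i=1}^n ∑_{j≤n, j≠i} Q_{i,j} x_i x_j y_i y_j| ‖_p. Then there exist universal constants c₁, c₂ > 0 such that c₁·p·‖Q_{1,2}‖_p ≤ U_p ≤ c₂·p·‖Q_{1,2}‖_p. -/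
open MeasureTheory ProbabilityTheory Finset Real

/-- The hash variables `η` of the sparse, sign-consistent JL construction with per-column
uniform supports: independently for each column, the set of rows where the column equals `1`
is a uniformly random `s`-element subset of the `m` rows. -/
structure UnifSSCJL (Ω : Type) [MeasureSpace Ω] (n m s : ℕ) where
  η : Fin m → Fin n → Ω → ℝ
  meas_eta : ∀ r i, Measurable (η r i)
  eta01 : ∀ r i ω, η r i ω = 0 ∨ η r i ω = 1
  cols_indep : iIndepFun (fun i ω => fun r => η r i ω) ℙ
  unif : ∀ (i : Fin n) (S : Finset (Fin m)), S.card = s →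
    ℙ {ω | ∀ r, η r i ω = 1 ↔ r ∈ S} = (Nat.choose m s : ENNReal)⁻¹

/-- `Q i j` is the number of collisions between the nonzero entries of columns `i` and `j`. -/
noncomputable def UnifSSCJL.Q {Ω : Type} [MeasureSpace Ω] {n m s : ℕ} (c : UnifSSCJL Ω n m s)
    (i j : Fin n) (ω : Ω) : ℝ :=
  ∑ r, c.η r i ω * c.η r j ω

/-! ### Auxiliary lemmas -/

lemma hw_sum_two_support {n : ℕ} (i0 i1 : Fin n) (h0 : (i0 : ℕ) = 0) (h1 : (i1 : ℕ) = 1)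
    (f : Fin n → ℝ) (hf : ∀ k : Fin n, ¬ (k : ℕ) < 2 → f k = 0) :
    ∑ k, f k = f i0 + f i1 := by
  classical
  have h01 : i0 ≠ i1 := by simp [Fin.ext_iff, h0, h1]
  rw [← Finset.sum_subset (Finset.subset_univ ({i0, i1} : Finset (Fin n)))]
  · rw [Finset.sum_pair h01]
  · intro k _ hk
    apply hf
    intro hlt
    apply hk
    simp only [Finset.mem_insert, Finset.mem_singleton, Fin.ext_iff]
    omega

lemma hw_inner_single {n : ℕ} (i0 i1 : Fin n) (hne : i1 ≠ i0) (g : Fin n → ℝ)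
    (hg : ∀ j : Fin n, j ≠ i0 → j ≠ i1 → g j = 0) :
    ∑ j ∈ Finset.univ.filter (fun j => j ≠ i0), g j = g i1 := by
  classical
  apply Finset.sum_eq_single_of_mem
  · simp [hne]
  · intro b hb hbne
    exact hg b (by simpa using hb) hbne

lemma hw_halfsq : (1 / Real.sqrt 2) ^ 2 = 1 / 2 := by
  rw [div_pow, one_pow, Real.sq_sqrt] <;> norm_num

lemma hw_val_lt_two {n : ℕ} (i0 i1 : Fin n) (h0 : (i0 : ℕ) = 0) (h1 : (i1 : ℕ) = 1)
    (j : Fin n) (hj : (j : ℕ) < 2) : j = i0 ∨ j = i1 := by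
  have h2 : (j : ℕ) = 0 ∨ (j : ℕ) = 1 := by omega
  rcases h2 with h | h
  · exact Or.inl (Fin.ext (by omega))
  · exact Or.inr (Fin.ext (by omega))

lemma hw_double_sum_sq {n : ℕ} (i0 i1 : Fin n) (h0 : (i0 : ℕ) = 0) (h1 : (i1 : ℕ) = 1)
    (Q : Fin n → Fin n → ℝ) (hsymm : ∀ i j, Q i j = Q j i) :
    (∑ i, ∑ j ∈ Finset.univ.filter (fun j => j ≠ i),
      Q i j ^ 2 * (if (i : ℕ) < 2 then 1 / Real.sqrt 2 else 0) ^ 2 *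
        (if (j : ℕ) < 2 then 1 / Real.sqrt 2 else 0) ^ 2)
    = Q i0 i1 ^ 2 / 2 := by
  classical
  have h01 : i0 ≠ i1 := by simp [Fin.ext_iff, h0, h1]
  rw [hw_sum_two_support i0 i1 h0 h1 _ (fun k hk => Finset.sum_eq_zero (fun j _ => by
    simp only [if_neg hk]; simp))]
  have e0 : ∑ j ∈ Finset.univ.filter (fun j => j ≠ i0),
      Q i0 j ^ 2 * (if (i0 : ℕ) < 2 then 1 / Real.sqrt 2 else 0) ^ 2 *
        (if (j : ℕ) < 2 then 1 / Real.sqrt 2 else 0) ^ 2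
      = Q i0 i1 ^ 2 / 4 := by
    rw [hw_inner_single i0 i1 h01.symm _ (fun j hj0 hj1 => by
      have hjv : ¬ (j : ℕ) < 2 := fun h => by
        rcases hw_val_lt_two i0 i1 h0 h1 j h with h | h <;> simp_all
      simp only [if_neg hjv]; simp)]
    rw [if_pos (by omega : (i0 : ℕ) < 2), if_pos (by omega : (i1 : ℕ) < 2), hw_halfsq]
    ring
  have e1 : ∑ j ∈ Finset.univ.filter (fun j => j ≠ i1),
      Q i1 j ^ 2 * (if (i1 : ℕ) < 2 then 1 / Real.sqrt 2 else 0) ^ 2 *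
        (if (j : ℕ) < 2 then 1 / Real.sqrt 2 else 0) ^ 2
      = Q i0 i1 ^ 2 / 4 := by
    rw [hw_inner_single i1 i0 h01 _ (fun j hj1 hj0 => by
      have hjv : ¬ (j : ℕ) < 2 := fun h => by
        rcases hw_val_lt_two i0 i1 h0 h1 j h with h | h <;> simp_all
      simp only [if_neg hjv]; simp)]
    rw [if_pos (by omega : (i0 : ℕ) < 2), if_pos (by omega : (i1 : ℕ) < 2), hw_halfsq,
      hsymm i1 i0]
    ring
  rw [e0, e1]
  ring

lemma hw_double_sum_lin {n : ℕ} (i0 i1 : Fin n) (h0 : (i0 : ℕ) = 0) (h1 : (i1 : ℕ) = 1)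
    (Q : Fin n → Fin n → ℝ) (hsymm : ∀ i j, Q i j = Q j i) (y : Fin n → ℝ) :
    (∑ i, ∑ j ∈ Finset.univ.filter (fun j => j ≠ i),
      Q i j * (if (i : ℕ) < 2 then 1 / Real.sqrt 2 else 0) *
        (if (j : ℕ) < 2 then 1 / Real.sqrt 2 else 0) * y i * y j)
    = Q i0 i1 * y i0 * y i1 := by
  classical
  have h01 : i0 ≠ i1 := by simp [Fin.ext_iff, h0, h1]
  have hs2 : (1 / Real.sqrt 2) * (1 / Real.sqrt 2) = 1 / 2 := by
    rw [div_mul_div_comm, one_mul, Real.mul_self_sqrt] <;> norm_num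
  rw [hw_sum_two_support i0 i1 h0 h1 _ (fun k hk => Finset.sum_eq_zero (fun j _ => by
    simp only [if_neg hk]; simp))]
  have e0 : ∑ j ∈ Finset.univ.filter (fun j => j ≠ i0),
      Q i0 j * (if (i0 : ℕ) < 2 then 1 / Real.sqrt 2 else 0) *
        (if (j : ℕ) < 2 then 1 / Real.sqrt 2 else 0) * y i0 * y j
      = Q i0 i1 / 2 * y i0 * y i1 := by
    rw [hw_inner_single i0 i1 h01.symm _ (fun j hj0 hj1 => by
      have hjv : ¬ (j : ℕ) < 2 := fun h => by
        rcases hw_val_lt_two i0 i1 h0 h1 j h with h | h <;> simp_all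
      simp only [if_neg hjv]; simp)]
    rw [if_pos (by omega : (i0 : ℕ) < 2), if_pos (by omega : (i1 : ℕ) < 2)]
    linear_combination (Q i0 i1 * y i0 * y i1) * hs2
  have e1 : ∑ j ∈ Finset.univ.filter (fun j => j ≠ i1),
      Q i1 j * (if (i1 : ℕ) < 2 then 1 / Real.sqrt 2 else 0) *
        (if (j : ℕ) < 2 then 1 / Real.sqrt 2 else 0) * y i1 * y j
      = Q i0 i1 / 2 * y i0 * y i1 := by
    rw [hw_inner_single i1 i0 h01 _ (fun j hj1 hj0 => by
      have hjv : ¬ (j : ℕ) < 2 := fun h => by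
        rcases hw_val_lt_two i0 i1 h0 h1 j h with h | h <;> simp_all
      simp only [if_neg hjv]; simp)]
    rw [if_pos (by omega : (i0 : ℕ) < 2), if_pos (by omega : (i1 : ℕ) < 2), hsymm i1 i0]
    linear_combination (Q i0 i1 * y i0 * y i1) * hs2
  rw [e0, e1]
  ring

lemma hw_sup_abs_mul {n : ℕ} (i0 i1 : Fin n) (h0 : (i0 : ℕ) = 0) (h1 : (i1 : ℕ) = 1)
    (q : ℝ) (hq : 0 ≤ q) :
    (⨆ y : {y : Fin n → ℝ // ∑ k, y k ^ 2 = 1}, |q * y.1 i0 * y.1 i1|) = q / 2 := by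
  classical
  set yb : Fin n → ℝ := fun k => if (k : ℕ) < 2 then 1 / Real.sqrt 2 else 0 with hyb
  have hybsum : ∑ k, yb k ^ 2 = 1 := by
    rw [hw_sum_two_support i0 i1 h0 h1 _ (fun k hk => by simp only [hyb, if_neg hk]; simp)]
    simp only [yb, if_pos (show (i0 : ℕ) < 2 by omega), if_pos (show (i1 : ℕ) < 2 by omega)]
    rw [hw_halfsq]; norm_num
  haveI : Nonempty {y : Fin n → ℝ // ∑ k, y k ^ 2 = 1} := ⟨⟨yb, hybsum⟩⟩
  have hbound : ∀ y : {y : Fin n → ℝ // ∑ k, y k ^ 2 = 1},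
      |q * y.1 i0 * y.1 i1| ≤ q / 2 := by
    intro ⟨y, hy⟩
    have h01 : i0 ≠ i1 := by simp [Fin.ext_iff, h0, h1]
    have hle : y i0 ^ 2 + y i1 ^ 2 ≤ 1 := by
      rw [← hy, ← Finset.sum_pair (f := fun k => y k ^ 2) h01]
      exact Finset.sum_le_univ_sum_of_nonneg (fun k => sq_nonneg _)
    have habs : |y i0 * y i1| ≤ 1 / 2 := by
      rw [abs_mul]
      nlinarith [sq_nonneg (|y i0| - |y i1|), abs_nonneg (y i0), abs_nonneg (y i1),
        sq_abs (y i0), sq_abs (y i1)]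
    calc |q * y i0 * y i1| = q * |y i0 * y i1| := by
          rw [mul_assoc, abs_mul, abs_of_nonneg hq]
      _ ≤ q * (1 / 2) := mul_le_mul_of_nonneg_left habs hq
      _ = q / 2 := by ring
  apply le_antisymm
  · exact ciSup_le hbound
  · have hval : |q * yb i0 * yb i1| = q / 2 := by
      simp only [yb, if_pos (show (i0 : ℕ) < 2 by omega), if_pos (show (i1 : ℕ) < 2 by omega)]
      have hs2 : (1 / Real.sqrt 2) * (1 / Real.sqrt 2) = 1 / 2 := by
        rw [div_mul_div_comm, one_mul, Real.mul_self_sqrt] <;> norm_num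
      rw [mul_assoc, hs2, abs_of_nonneg (by linarith)]
      ring
    calc q / 2 = |q * yb i0 * yb i1| := hval.symm
      _ ≤ _ := le_ciSup (f := fun y : {y : Fin n → ℝ // ∑ k, y k ^ 2 = 1} =>
            |q * y.1 i0 * y.1 i1|)
          ⟨q / 2, by rintro x ⟨y, rfl⟩; exact hbound y⟩ ⟨yb, hybsum⟩

lemma hw_pnorm_nonneg {Ω : Type*} [MeasureSpace Ω] (Y : Ω → ℝ) (p : ℝ) :
    0 ≤ pnorm Y p :=
  Real.rpow_nonneg (integral_nonneg fun ω => Real.rpow_nonneg (abs_nonneg _) _) _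

lemma hw_pnorm_const_mul {Ω : Type*} [MeasureSpace Ω] (a : ℝ) (ha : 0 ≤ a) (Y : Ω → ℝ)
    (p : ℝ) (hp : 0 < p) :
    pnorm (fun ω => a * Y ω) p = a * pnorm Y p := by
  unfold pnorm
  have h1 : ∀ ω : Ω, |a * Y ω| ^ p = a ^ p * |Y ω| ^ p := fun ω => by
    rw [abs_mul, abs_of_nonneg ha, Real.mul_rpow ha (abs_nonneg _)]
  simp_rw [h1]
  rw [integral_const_mul, Real.mul_rpow (Real.rpow_nonneg ha _)
    (integral_nonneg fun ω => Real.rpow_nonneg (abs_nonneg _) _),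
    ← Real.rpow_mul ha, mul_one_div_cancel hp.ne', Real.rpow_one]

lemma hw_Q_nonneg {Ω : Type} [MeasureSpace Ω] {n m s : ℕ} (c : UnifSSCJL Ω n m s)
    (i j : Fin n) (ω : Ω) : 0 ≤ c.Q i j ω :=
  Finset.sum_nonneg fun r _ => mul_nonneg
    (by rcases c.eta01 r i ω with h | h <;> rw [h] <;> norm_num)
    (by rcases c.eta01 r j ω with h | h <;> rw [h] <;> norm_num)

lemma hw_Q_symm {Ω : Type} [MeasureSpace Ω] {n m s : ℕ} (c : UnifSSCJL Ω n m s)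
    (i j : Fin n) (ω : Ω) : c.Q i j ω = c.Q j i ω :=
  Finset.sum_congr rfl fun r _ => mul_comm _ _

theorem hanson_wright_term_eq_Q12 :
    ∃ c₁ c₂ : ℝ, 0 < c₁ ∧ 0 < c₂ ∧
      ∀ (Ω : Type) [MeasureSpace Ω] [IsProbabilityMeasure (ℙ : Measure Ω)]
        (n m s : ℕ) (hn : 2 ≤ n), 0 < s → s ≤ m →
        ∀ (c : UnifSSCJL Ω n m s) (p : ℕ), Even p → 2 ≤ p →
          c₁ * p * pnorm (c.Q ⟨0, by omega⟩ ⟨1, by omega⟩) p ≤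
            pnorm (fun ω =>
              Real.sqrt p * Real.sqrt (∑ i, ∑ j ∈ Finset.univ.filter (fun j => j ≠ i),
                  (c.Q i j ω) ^ 2 *
                    (if (i : ℕ) < 2 then 1 / Real.sqrt 2 else 0) ^ 2 *
                    (if (j : ℕ) < 2 then 1 / Real.sqrt 2 else 0) ^ 2) +
              p * ⨆ y : {y : Fin n → ℝ // ∑ k, y k ^ 2 = 1},
                  |∑ i, ∑ j ∈ Finset.univ.filter (fun j => j ≠ i),
                    c.Q i j ω *
                      (if (i : ℕ) < 2 then 1 / Real.sqrt 2 else 0) *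
                      (if (j : ℕ) < 2 then 1 / Real.sqrt 2 else 0) *
                      y.1 i * y.1 j|) p ∧
          pnorm (fun ω =>
              Real.sqrt p * Real.sqrt (∑ i, ∑ j ∈ Finset.univ.filter (fun j => j ≠ i),
                  (c.Q i j ω) ^ 2 *
                    (if (i : ℕ) < 2 then 1 / Real.sqrt 2 else 0) ^ 2 *
                    (if (j : ℕ) < 2 then 1 / Real.sqrt 2 else 0) ^ 2) +
              p * ⨆ y : {y : Fin n → ℝ // ∑ k, y k ^ 2 = 1},
                  |∑ i, ∑ j ∈ Finset.univ.filter (fun j => j ≠ i),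
                    c.Q i j ω *
                      (if (i : ℕ) < 2 then 1 / Real.sqrt 2 else 0) *
                      (if (j : ℕ) < 2 then 1 / Real.sqrt 2 else 0) *
                      y.1 i * y.1 j|) p ≤
            c₂ * p * pnorm (c.Q ⟨0, by omega⟩ ⟨1, by omega⟩) p := by
  refine ⟨1/2, 2, by norm_num, by norm_num, ?_⟩
  intro Ω _ _ n m s hn hs hsm c p hpe hp2
  have i0 : Fin n := ⟨0, by omega⟩
  set Qf : Ω → ℝ := c.Q ⟨0, by omega⟩ ⟨1, by omega⟩ with hQf
  have hp2' : (2 : ℝ) ≤ (p : ℝ) := by exact_mod_cast hp2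
  have hppos : (0 : ℝ) < (p : ℝ) := by linarith
  set a : ℝ := Real.sqrt p / Real.sqrt 2 + p / 2 with ha
  have ha0 : 0 ≤ a := add_nonneg (div_nonneg (Real.sqrt_nonneg _) (Real.sqrt_nonneg _))
    (by positivity)
  have hfun : (fun ω =>
      Real.sqrt p * Real.sqrt (∑ i, ∑ j ∈ Finset.univ.filter (fun j => j ≠ i),
          (c.Q i j ω) ^ 2 *
            (if (i : ℕ) < 2 then 1 / Real.sqrt 2 else 0) ^ 2 *
            (if (j : ℕ) < 2 then 1 / Real.sqrt 2 else 0) ^ 2) +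
      (p : ℝ) * ⨆ y : {y : Fin n → ℝ // ∑ k, y k ^ 2 = 1},
          |∑ i, ∑ j ∈ Finset.univ.filter (fun j => j ≠ i),
            c.Q i j ω *
              (if (i : ℕ) < 2 then 1 / Real.sqrt 2 else 0) *
              (if (j : ℕ) < 2 then 1 / Real.sqrt 2 else 0) *
              y.1 i * y.1 j|)
      = fun ω => a * Qf ω := by
    funext ω
    have hQnn : 0 ≤ Qf ω := hw_Q_nonneg c _ _ ω
    rw [hw_double_sum_sq (⟨0, by omega⟩ : Fin n) ⟨1, by omega⟩ rfl rfl
      (fun i j => c.Q i j ω) (fun i j => hw_Q_symm c i j ω)]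
    have hsq : Real.sqrt (Qf ω ^ 2 / 2) = Qf ω / Real.sqrt 2 := by
      have h2 : Qf ω ^ 2 / 2 = (Qf ω / Real.sqrt 2) ^ 2 := by
        rw [div_pow, Real.sq_sqrt (by norm_num : (0:ℝ) ≤ 2)]
      rw [h2, Real.sqrt_sq (div_nonneg hQnn (Real.sqrt_nonneg _))]
    have hsup : (⨆ y : {y : Fin n → ℝ // ∑ k, y k ^ 2 = 1},
        |∑ i, ∑ j ∈ Finset.univ.filter (fun j => j ≠ i),
          c.Q i j ω *
            (if (i : ℕ) < 2 then 1 / Real.sqrt 2 else 0) *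
            (if (j : ℕ) < 2 then 1 / Real.sqrt 2 else 0) *
            y.1 i * y.1 j|) = Qf ω / 2 := by
      have hcong : ∀ y : {y : Fin n → ℝ // ∑ k, y k ^ 2 = 1},
          |∑ i, ∑ j ∈ Finset.univ.filter (fun j => j ≠ i),
            c.Q i j ω *
              (if (i : ℕ) < 2 then 1 / Real.sqrt 2 else 0) *
              (if (j : ℕ) < 2 then 1 / Real.sqrt 2 else 0) *
              y.1 i * y.1 j|
          = |Qf ω * y.1 (⟨0, by omega⟩ : Fin n) * y.1 (⟨1, by omega⟩ : Fin n)| := by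
        intro y
        rw [hw_double_sum_lin (⟨0, by omega⟩ : Fin n) ⟨1, by omega⟩ rfl rfl
          (fun i j => c.Q i j ω) (fun i j => hw_Q_symm c i j ω) y.1]
      rw [iSup_congr hcong]
      exact hw_sup_abs_mul (⟨0, by omega⟩ : Fin n) ⟨1, by omega⟩ rfl rfl (Qf ω) hQnn
    rw [hsq, hsup]
    ring
  rw [hfun, hw_pnorm_const_mul a ha0 Qf _ hppos]
  have hN : 0 ≤ pnorm Qf (p : ℝ) := hw_pnorm_nonneg Qf _
  have hsqrtp : Real.sqrt p ≤ (p : ℝ) := by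
    nlinarith [Real.sq_sqrt hppos.le, Real.sqrt_nonneg (p : ℝ),
      sq_nonneg (Real.sqrt (p : ℝ) - 1)]
  have hsqrt2 : (1 : ℝ) ≤ Real.sqrt 2 := by
    rw [show (1:ℝ) = Real.sqrt 1 by simp]
    exact Real.sqrt_le_sqrt (by norm_num)
  constructor
  · apply mul_le_mul_of_nonneg_right _ hN
    have : 0 ≤ Real.sqrt p / Real.sqrt 2 :=
      div_nonneg (Real.sqrt_nonneg _) (Real.sqrt_nonneg _)
    rw [ha]; linarith
  · apply mul_le_mul_of_nonneg_right _ hN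
    have hd : Real.sqrt p / Real.sqrt 2 ≤ Real.sqrt p :=
      div_le_self (Real.sqrt_nonneg _) hsqrt2
    rw [ha]; linarith
end

section
/- Let X be a random variable with the binomial distribution Bin(s, s/m) where s ≤ m are positive integers, let p be an integer with 1 ≤ p < s, set B := m/s², and assume B ≤ e^p/p. Then there exist universal constants c₁, c₂ > 0 such that: if B ≥ e/p then c₁·p/log(Bp) ≤ ‖X‖_p ≤ c₂·p/log(Bp), and if B < e/p then c₁/B ≤ ‖X‖_p ≤ c₂/B. -/
open MeasureTheory ProbabilityTheory Finset Real

/-- `X` has the binomial distribution `Bin(N, α)` (as a real-valued random variable). -/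
def HasBinomialDist {Ω : Type*} [MeasureSpace Ω] (X : Ω → ℝ) (N : ℕ) (α : ℝ) : Prop :=
  ∀ k : ℕ, ℙ {ω | X ω = (k : ℝ)} =
    ENNReal.ofReal ((N.choose k : ℝ) * α ^ k * (1 - α) ^ (N - k))

noncomputable def bw (s k : ℕ) (α : ℝ) : ℝ := (s.choose k : ℝ) * α ^ k * (1 - α) ^ (s - k)

lemma bw_nonneg {s k : ℕ} {α : ℝ} (h0 : 0 ≤ α) (h1 : α ≤ 1) : 0 ≤ bw s k α := by
  have h2 : (0:ℝ) ≤ 1 - α := by linarith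
  unfold bw; positivity

lemma bw_sum (s : ℕ) (α : ℝ) : ∑ k ∈ range (s+1), bw s k α = 1 := by
  have h := add_pow α (1-α) s
  simp only [add_sub_cancel, one_pow] at h
  have h2 : ∑ k ∈ range (s+1), bw s k α
      = ∑ m ∈ range (s+1), α ^ m * (1-α)^(s-m) * (s.choose m : ℝ) :=
    Finset.sum_congr rfl fun k _ => by unfold bw; ring
  rw [h2, ← h]

lemma bw_mean (s : ℕ) (hs : 0 < s) (α : ℝ) :
    ∑ k ∈ range (s+1), (k : ℝ) * bw s k α = s * α := by
  obtain ⟨n, rfl⟩ : ∃ n, s = n + 1 := ⟨s - 1, (Nat.succ_pred_eq_of_pos hs).symm⟩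
  rw [Finset.sum_range_succ']
  simp only [Nat.cast_zero, zero_mul, add_zero]
  have key : ∀ k ∈ range (n+1), ((k+1:ℕ):ℝ) * bw (n+1) (k+1) α = ((n:ℝ)+1) * α * bw n k α := by
    intro k hk
    unfold bw
    have hc0 := Nat.add_one_mul_choose_eq n k
    have hc : ((k:ℝ)+1) * ((n+1).choose (k+1) : ℝ) = ((n:ℝ)+1) * (n.choose k : ℝ) := by
      have h' : ((n.succ * n.choose k : ℕ) : ℝ) = ((n.succ.choose k.succ * k.succ : ℕ) : ℝ) := by
        exact_mod_cast congrArg (Nat.cast (R := ℝ)) hc0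
      push_cast at h'
      linarith
    have hsub : n + 1 - (k + 1) = n - k := by omega
    rw [hsub]
    push_cast
    calc ((k:ℝ)+1) * ((((n+1).choose (k+1) : ℝ)) * α ^ (k+1) * (1-α)^(n-k))
        = (((k:ℝ)+1) * ((n+1).choose (k+1) : ℝ)) * α ^ (k+1) * (1-α)^(n-k) := by ring
      _ = (((n:ℝ)+1) * (n.choose k : ℝ)) * α ^ (k+1) * (1-α)^(n-k) := by rw [hc]
      _ = ((n:ℝ)+1) * α * ((n.choose k : ℝ) * α ^ k * (1-α)^(n-k)) := by ring
  calc ∑ k ∈ range (n+1), ((k+1:ℕ):ℝ) * bw (n+1) (k+1) α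
      = ∑ k ∈ range (n+1), ((n:ℝ)+1) * α * bw n k α := Finset.sum_congr rfl key
    _ = ((n:ℝ)+1) * α * ∑ k ∈ range (n+1), bw n k α := by rw [Finset.mul_sum]
    _ = ((n:ℝ)+1) * α := by rw [bw_sum]; ring
    _ = (((n+1):ℕ):ℝ) * α := by push_cast; ring

lemma integral_comp_eq_sum {Ω : Type*} [MeasureSpace Ω] [IsProbabilityMeasure (ℙ : Measure Ω)]
    {X : Ω → ℝ} (hX : Measurable X) {s : ℕ} {α : ℝ} (h0 : 0 ≤ α) (h1 : α ≤ 1)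
    (hB : HasBinomialDist X s α) (f : ℝ → ℝ) :
    ∫ ω, f (X ω) = ∑ k ∈ range (s+1), f k * bw s k α := by
  set A : ℕ → Set Ω := fun k => X ⁻¹' {(k:ℝ)} with hA
  have hmeas : ∀ k, MeasurableSet (A k) := fun k => hX (measurableSet_singleton _)
  have hPA : ∀ k, ℙ (A k) = ENNReal.ofReal (bw s k α) := by
    intro k
    have := hB k
    convert this using 2 <;> rfl
  have hdisj : Set.PairwiseDisjoint (↑(range (s+1))) A := by
    intro i _ j _ hij
    refine Set.disjoint_left.2 fun ω hi hj => ?_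
    exact hij (Nat.cast_injective ((Set.mem_preimage.1 hi).symm.trans (Set.mem_preimage.1 hj) : ((i:ℝ)) = j))
  set U : Set Ω := ⋃ k ∈ range (s+1), A k with hUdef
  have hUmeas : MeasurableSet U := MeasurableSet.biUnion (range (s+1)).countable_toSet (fun k _ => hmeas k)
  have hU : ℙ U = 1 := by
    rw [hUdef, measure_biUnion_finset hdisj (fun k _ => hmeas k)]
    calc ∑ k ∈ range (s+1), ℙ (A k) = ∑ k ∈ range (s+1), ENNReal.ofReal (bw s k α) := by
          exact Finset.sum_congr rfl fun k _ => hPA k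
      _ = ENNReal.ofReal (∑ k ∈ range (s+1), bw s k α) :=
          (ENNReal.ofReal_sum_of_nonneg (fun k _ => bw_nonneg h0 h1)).symm
      _ = 1 := by rw [bw_sum]; simp
  have hU0 : ∀ᵐ ω ∂(ℙ : Measure Ω), ω ∈ U := by
    rw [ae_iff]
    have : {ω | ¬ ω ∈ U} = Uᶜ := rfl
    rw [this, measure_compl hUmeas (measure_ne_top _ _), hU]
    simp
  set g : Ω → ℝ := fun ω => ∑ k ∈ range (s+1), Set.indicator (A k) (fun _ => f k) ω with hg
  have hae : (fun ω => f (X ω)) =ᵐ[(ℙ : Measure Ω)] g := by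
    refine hU0.mono fun ω hω => ?_
    obtain ⟨k, hk, hωk⟩ := Set.mem_iUnion₂.1 hω
    have hXk : X ω = (k:ℝ) := hωk
    have : g ω = f k := by
      show (∑ j ∈ range (s+1), Set.indicator (A j) (fun _ => f j) ω) = f k
      rw [Finset.sum_eq_single k]
      · simp [Set.indicator_of_mem, hωk]
      · intro j _ hjk
        apply Set.indicator_of_notMem
        intro hj
        exact hjk (Nat.cast_injective ((Set.mem_preimage.1 hj).symm.trans hXk : ((j:ℝ)) = k))
      · intro h; exact absurd hk h
    show f (X ω) = g ω
    rw [hXk, this]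
  rw [integral_congr_ae hae, hg]
  rw [integral_finset_sum]
  · refine Finset.sum_congr rfl fun k _ => ?_
    rw [integral_indicator_const _ (hmeas k)]
    rw [measureReal_def, hPA k, smul_eq_mul, ENNReal.toReal_ofReal (bw_nonneg h0 h1), mul_comm]
  · intro k _
    rw [integrable_indicator_iff (hmeas k)]
    exact integrableOn_const (measure_ne_top _ _)

lemma pow_le_mgf {p : ℕ} (hp : 1 ≤ p) {l x : ℝ} (hl : 0 < l) (hx : 0 ≤ x) :
    x ^ p ≤ ((p:ℝ)/l)^p * exp (l*x - (p:ℝ)) := by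
  have hp0 : (0:ℝ) < p := by exact_mod_cast Nat.lt_of_lt_of_le Nat.zero_lt_one hp
  rcases eq_or_lt_of_le hx with h | hx0
  · rw [← h, zero_pow (by omega)]
    positivity
  · set t : ℝ := l * x / p with ht
    have ht0 : 0 < t := by positivity
    have h1 : t ≤ exp (t - 1) := by
      have := Real.log_le_sub_one_of_pos ht0
      calc t = exp (Real.log t) := (Real.exp_log ht0).symm
        _ ≤ exp (t - 1) := exp_le_exp.2 this
    have h2 : t ^ p ≤ exp ((p:ℝ) * (t-1)) := by
      calc t ^ p ≤ exp (t-1) ^ p := pow_le_pow_left₀ (le_of_lt ht0) h1 p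
        _ = exp ((p:ℝ)*(t-1)) := (Real.exp_nat_mul _ p).symm
    have hxt : x = (p:ℝ) * t / l := by rw [ht]; field_simp
    have hpt : (p:ℝ) * (t - 1) = l * x - p := by rw [ht]; field_simp
    calc x ^ p = ((p:ℝ)/l)^p * t^p := by
          rw [hxt]
          field_simp
          ring
      _ ≤ ((p:ℝ)/l)^p * exp (l*x - p) := by
          rw [← hpt]; exact mul_le_mul_of_nonneg_left h2 (by positivity)

lemma bw_mgf (s : ℕ) {α : ℝ} (l : ℝ) :
    ∑ k ∈ range (s+1), exp (l*k) * bw s k α = (α * exp l + (1-α))^s := by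
  have h := add_pow (α * exp l) (1-α) s
  rw [h]
  refine Finset.sum_congr rfl fun k _ => ?_
  unfold bw
  rw [mul_pow, mul_comm l (k:ℝ), Real.exp_nat_mul]
  ring

lemma moment_mgf {s p : ℕ} (hp : 1 ≤ p) {α l : ℝ} (h0 : 0 ≤ α) (h1 : α ≤ 1) (hl : 0 < l) :
    ∑ k ∈ range (s+1), (k:ℝ)^p * bw s k α
      ≤ ((p:ℝ)/l)^p * exp ((s:ℝ)*α*(exp l - 1) - p) := by
  have step1 : ∑ k ∈ range (s+1), (k:ℝ)^p * bw s k α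
      ≤ ((p:ℝ)/l)^p * exp (-(p:ℝ)) * ∑ k ∈ range (s+1), exp (l*k) * bw s k α := by
    rw [Finset.mul_sum]
    refine Finset.sum_le_sum fun k _ => ?_
    have := pow_le_mgf hp hl (Nat.cast_nonneg k : (0:ℝ) ≤ k)
    have hb := bw_nonneg (s := s) (k := k) h0 h1
    calc (k:ℝ)^p * bw s k α ≤ (((p:ℝ)/l)^p * exp (l*k - p)) * bw s k α :=
          mul_le_mul_of_nonneg_right this hb
      _ = ((p:ℝ)/l)^p * exp (-(p:ℝ)) * (exp (l*k) * bw s k α) := by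
          rw [show l*(k:ℝ) - p = -(p:ℝ) + l*k by ring, Real.exp_add]; ring
  rw [bw_mgf s l] at step1
  have hbase : (0:ℝ) ≤ α * exp l + (1-α) := by nlinarith [Real.exp_pos l]
  have step2 : (α * exp l + (1-α))^s ≤ exp ((s:ℝ)*α*(exp l - 1)) := by
    have h3 : α * exp l + (1-α) = 1 + α * (exp l - 1) := by ring
    have h4 : α * exp l + (1-α) ≤ exp (α * (exp l - 1)) := by
      rw [h3]; have := Real.add_one_le_exp (α * (exp l - 1)); linarith
    calc (α * exp l + (1-α))^s ≤ exp (α * (exp l - 1))^s := pow_le_pow_left₀ hbase h4 s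
      _ = exp ((s:ℝ)*(α * (exp l - 1))) := (Real.exp_nat_mul _ s).symm
      _ = exp ((s:ℝ)*α*(exp l - 1)) := by ring_nf
  calc ∑ k ∈ range (s+1), (k:ℝ)^p * bw s k α
      ≤ ((p:ℝ)/l)^p * exp (-(p:ℝ)) * (α * exp l + (1-α))^s := step1
    _ ≤ ((p:ℝ)/l)^p * exp (-(p:ℝ)) * exp ((s:ℝ)*α*(exp l - 1)) := by
        exact mul_le_mul_of_nonneg_left step2 (by positivity)
    _ = ((p:ℝ)/l)^p * exp ((s:ℝ)*α*(exp l - 1) - p) := by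
        rw [mul_assoc, ← Real.exp_add]; ring_nf

lemma moment_jensen {s p : ℕ} {α : ℝ} (hs : 0 < s) (h0 : 0 ≤ α) (h1 : α ≤ 1) :
    ((s:ℝ)*α)^p ≤ ∑ k ∈ range (s+1), (k:ℝ)^p * bw s k α := by
  have := Real.pow_arith_mean_le_arith_mean_pow (range (s+1)) (fun k => bw s k α)
    (fun k => (k:ℝ)) (fun k _ => bw_nonneg h0 h1) (bw_sum s α) (fun k _ => Nat.cast_nonneg k) p
  have hm : ∑ k ∈ range (s+1), bw s k α * (k:ℝ) = (s:ℝ)*α := by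
    rw [← bw_mean s hs α]; exact Finset.sum_congr rfl fun k _ => mul_comm _ _
  rw [hm] at this
  calc ((s:ℝ)*α)^p ≤ ∑ k ∈ range (s+1), bw s k α * (k:ℝ)^p := this
    _ = ∑ k ∈ range (s+1), (k:ℝ)^p * bw s k α := Finset.sum_congr rfl fun k _ => mul_comm _ _

lemma moment_single {s p k : ℕ} {α : ℝ} (h0 : 0 ≤ α) (h1 : α ≤ 1) (hk : k ∈ range (s+1)) :
    (k:ℝ)^p * bw s k α ≤ ∑ j ∈ range (s+1), (j:ℝ)^p * bw s j α :=
  Finset.single_le_sum (f := fun (j:ℕ) => (j:ℝ)^p * bw s j α) (fun j _ => mul_nonneg (by positivity) (bw_nonneg h0 h1)) hk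

lemma bw_lower {s k : ℕ} {α : ℝ} (h0 : 0 ≤ α) (h1 : α ≤ 1) (hk : 1 ≤ k) (h2k : 2*k ≤ s) :
    ((s:ℝ)*α/(2*k))^k * (1-α)^s ≤ bw s k α := by
  have hks : k ≤ s := by omega
  have hk0 : (0:ℝ) < k := by exact_mod_cast hk
  have hchoose : ((s:ℝ)/(2*(k:ℝ)))^k ≤ (s.choose k : ℝ) := by
    have hnat : (s + 1 - k)^k ≤ k^k * s.choose k := by
      calc (s + 1 - k)^k ≤ s.descFactorial k := Nat.pow_sub_le_descFactorial s k
        _ = Nat.factorial k * s.choose k := Nat.descFactorial_eq_factorial_mul_choose s k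
        _ ≤ k^k * s.choose k := Nat.mul_le_mul_right _ (Nat.factorial_le_pow k)
    have hreal : (((s+1-k:ℕ)):ℝ)^k ≤ (k:ℝ)^k * (s.choose k : ℝ) := by exact_mod_cast hnat
    have hhalf : (s:ℝ)/2 ≤ ((s+1-k:ℕ):ℝ) := by
      have : s ≤ 2*(s+1-k) := by omega
      have := (Nat.cast_le (α := ℝ)).2 this
      push_cast at this; linarith
    have h5 : ((s:ℝ)/2)^k ≤ (k:ℝ)^k * (s.choose k : ℝ) :=
      le_trans (pow_le_pow_left₀ (by positivity) hhalf k) hreal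
    rw [div_pow, div_le_iff₀ (by positivity), mul_pow]
    calc (s:ℝ)^k = ((s:ℝ)/2)^k * 2^k := by rw [div_pow]; field_simp
      _ ≤ ((k:ℝ)^k * (s.choose k : ℝ)) * 2^k := by
          exact mul_le_mul_of_nonneg_right h5 (by positivity)
      _ = (s.choose k:ℝ) * (2^k * (k:ℝ)^k) := by ring
  have hpow : (1-α)^s ≤ (1-α)^(s-k) :=
    pow_le_pow_of_le_one (by linarith) (by linarith) (by omega)
  have hsa : ((s:ℝ)*α/(2*k))^k = ((s:ℝ)/(2*k))^k * α^k := by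
    rw [← mul_pow]; congr 1; ring
  unfold bw
  calc ((s:ℝ)*α/(2*k))^k * (1-α)^s
      ≤ ((s:ℝ)/(2*k))^k * α^k * (1-α)^(s-k) := by
        rw [hsa]
        exact mul_le_mul_of_nonneg_left hpow (by positivity) |>.trans_eq rfl
      _ ≤ (s.choose k : ℝ) * α^k * (1-α)^(s-k) := by
        have h6 : (0:ℝ) ≤ 1 - α := by linarith
        have := mul_le_mul_of_nonneg_right hchoose (a := α^k * (1-α)^(s-k)) (by positivity)
        calc ((s:ℝ)/(2*k))^k * α^k * (1-α)^(s-k)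
            = ((s:ℝ)/(2*(k:ℝ)))^k * (α^k * (1-α)^(s-k)) := by ring
          _ ≤ (s.choose k : ℝ) * (α^k * (1-α)^(s-k)) := this
          _ = (s.choose k : ℝ) * α^k * (1-α)^(s-k) := by ring

lemma one_sub_ge_exp {a : ℝ} (h0 : 0 ≤ a) (h2 : a ≤ 1/2) : exp (-(2*a)) ≤ 1 - a := by
  have h1 : a + 1 ≤ exp a := Real.add_one_le_exp a
  have hsq : (1+a)^2 ≤ exp (2*a) := by
    have h3 : exp (2*a) = exp a * exp a := by rw [← Real.exp_add]; ring_nf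
    nlinarith
  have hpos : (0:ℝ) < exp (2*a) := Real.exp_pos _
  have hinv : exp (-(2*a)) = 1 / exp (2*a) := by rw [Real.exp_neg]; ring
  rw [hinv, div_le_iff₀ hpos]
  have h4 : (0:ℝ) ≤ 1 - a := by linarith
  have h5 : 0 ≤ a * (1 - a - a^2) := mul_nonneg h0 (by nlinarith)
  nlinarith [mul_le_mul_of_nonneg_left hsq h4, h5]

set_option maxHeartbeats 1000000 in
theorem binomial_two_sided_moment_bound :
    ∃ c₁ c₂ : ℝ, 0 < c₁ ∧ 0 < c₂ ∧
      ∀ (Ω : Type) [MeasureSpace Ω] [IsProbabilityMeasure (ℙ : Measure Ω)]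
        (s m : ℕ), 0 < s → s ≤ m →
        ∀ (X : Ω → ℝ), Measurable X → HasBinomialDist X s ((s : ℝ) / m) →
        ∀ p : ℕ, 1 ≤ p → p < s →
          (m : ℝ) / s ^ 2 ≤ Real.exp p / p →
          ((Real.exp 1 / p ≤ (m : ℝ) / s ^ 2 →
            c₁ * p / Real.log ((m : ℝ) / s ^ 2 * p) ≤ pnorm X p ∧
              pnorm X p ≤ c₂ * p / Real.log ((m : ℝ) / s ^ 2 * p)) ∧
          ((m : ℝ) / s ^ 2 < Real.exp 1 / p →
            c₁ / ((m : ℝ) / s ^ 2) ≤ pnorm X p ∧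
              pnorm X p ≤ c₂ / ((m : ℝ) / s ^ 2))) := by
  refine ⟨exp (-7), exp (exp (exp 1)), Real.exp_pos _, Real.exp_pos _, ?_⟩
  intro Ω _ _ s m hs hsm X hX hB p hp1 hps hBe
  set c₁ : ℝ := exp (-7) with hc₁
  set c₂ : ℝ := exp (exp (exp 1)) with hc₂
  have hc₁0 : 0 < c₁ := Real.exp_pos _
  have hc₂0 : 0 < c₂ := Real.exp_pos _
  have hc₁1 : c₁ ≤ 1 := by
    rw [hc₁]
    calc exp (-7:ℝ) ≤ exp 0 := Real.exp_le_exp.2 (by norm_num)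
      _ = 1 := Real.exp_zero
  have hc₂1 : 1 ≤ c₂ := by
    rw [hc₂]
    calc (1:ℝ) = exp 0 := Real.exp_zero.symm
      _ ≤ exp (exp (exp 1)) := Real.exp_le_exp.2 (by positivity)
  clear_value c₁ c₂
  have hm : 0 < m := lt_of_lt_of_le hs hsm
  have hs0 : (0:ℝ) < s := by exact_mod_cast hs
  have hm0 : (0:ℝ) < m := by exact_mod_cast hm
  have hp0 : (0:ℝ) < p := by exact_mod_cast Nat.lt_of_lt_of_le Nat.zero_lt_one hp1
  have hp1' : (1:ℝ) ≤ p := by exact_mod_cast hp1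
  have hpsR : (p:ℝ) + 1 ≤ s := by exact_mod_cast hps
  set α : ℝ := (s:ℝ)/m with hαdef
  have hα0 : 0 < α := div_pos hs0 hm0
  have hα1 : α ≤ 1 := by rw [hαdef, div_le_one hm0]; exact_mod_cast hsm
  set A : ℝ := (m:ℝ)/(s:ℝ)^2 with hAdef
  have hA0 : 0 < A := div_pos hm0 (pow_pos hs0 2)
  obtain ⟨μ, hμdef⟩ : ∃ x : ℝ, x = (s:ℝ)*α := ⟨_, rfl⟩
  have hμ0 : 0 < μ := hμdef ▸ mul_pos hs0 hα0
  have hAμ : A * μ = 1 := by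
    rw [hAdef, hμdef, hαdef]; field_simp
  have hμA : μ = 1/A := by
    rw [eq_div_iff hA0.ne']; linarith [hAμ]
  clear_value α A
  obtain ⟨M, hMdef⟩ : ∃ x : ℝ, x = ∑ k ∈ range (s+1), (k:ℝ)^p * bw s k α := ⟨_, rfl⟩
  have hM0 : 0 ≤ M := hMdef ▸ Finset.sum_nonneg fun k _ =>
    mul_nonneg (by positivity) (bw_nonneg hα0.le hα1)
  have hint : ∫ ω, |X ω| ^ (p:ℝ) = M := by
    rw [integral_comp_eq_sum hX hα0.le hα1 hB (fun x => |x| ^ (p:ℝ)), hMdef]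
    refine Finset.sum_congr rfl fun k _ => ?_
    rw [abs_of_nonneg (Nat.cast_nonneg k), Real.rpow_natCast]
  have hpnorm : pnorm X p = M ^ ((1:ℝ)/p) := by
    unfold pnorm; rw [hint]
  have hcancel : ∀ C : ℝ, 0 ≤ C → (C^p) ^ ((1:ℝ)/(p:ℝ)) = C := by
    intro C hC
    rw [← Real.rpow_natCast C p, ← Real.rpow_mul hC, mul_one_div_cancel (ne_of_gt hp0),
      Real.rpow_one]
  have hub : ∀ C : ℝ, 0 ≤ C → M ≤ C^p → pnorm X p ≤ C := by
    intro C hC h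
    rw [hpnorm, ← hcancel C hC]
    exact Real.rpow_le_rpow hM0 h (by positivity)
  have hlb : ∀ C : ℝ, 0 ≤ C → C^p ≤ M → C ≤ pnorm X p := by
    intro C hC h
    rw [hpnorm, ← hcancel C hC]
    exact Real.rpow_le_rpow (by positivity) h (by positivity)
  constructor
  · -- Case 1 : exp 1 / p ≤ A
    intro hcase
    rw [div_le_iff₀ hp0] at hcase   -- exp 1 ≤ A * p
    rw [le_div_iff₀ hp0] at hBe     -- A * p ≤ exp p
    have hμp : μ * exp 1 ≤ p := by
      calc μ * exp 1 ≤ μ * (A * p) := mul_le_mul_of_nonneg_left hcase hμ0.le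
        _ = (A * μ) * p := by ring
        _ = p := by rw [hAμ]; ring
    obtain ⟨L, hLdef⟩ : ∃ x : ℝ, x = Real.log (A * p) := ⟨_, rfl⟩
    have hAp0 : 0 < A * (p:ℝ) := mul_pos hA0 hp0
    have hL1 : 1 ≤ L := by
      rw [hLdef]
      calc (1:ℝ) = Real.log (exp 1) := (Real.log_exp 1).symm
        _ ≤ Real.log (A * p) := Real.log_le_log (Real.exp_pos 1) hcase
    have hL0 : 0 < L := lt_of_lt_of_le one_pos hL1
    have hLp : L ≤ p := by
      rw [hLdef]
      calc Real.log (A * p) ≤ Real.log (exp p) := Real.log_le_log hAp0 hBe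
        _ = p := Real.log_exp _
    have hexpL : exp L = A * p := by rw [hLdef]; exact Real.exp_log hAp0
    have hμeL : μ * exp L = p := by
      rw [hexpL]
      calc μ * (A * p) = (A * μ) * p := by ring
        _ = p := by rw [hAμ]; ring
    rw [← hLdef]
    constructor
    · -- lower bound, case 1
      have hq0 : 0 < (p:ℝ)/(2*L) := by positivity
      obtain ⟨k, hkdef⟩ : ∃ x : ℕ, x = ⌈(p:ℝ)/(2*L)⌉₊ := ⟨_, rfl⟩
      have hk1 : 1 ≤ k := hkdef ▸ Nat.one_le_ceil_iff.2 hq0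
      have hkge : (p:ℝ)/(2*L) ≤ k := hkdef ▸ Nat.le_ceil _
      have hklt : (k:ℝ) < (p:ℝ)/(2*L) + 1 := hkdef ▸ Nat.ceil_lt_add_one hq0.le
      have hpL : (p:ℝ)/L ≤ p := by
        rw [div_le_iff₀ hL0]
        calc (p:ℝ) = p * 1 := (mul_one _).symm
          _ ≤ p * L := mul_le_mul_of_nonneg_left hL1 hp0.le
      have hhalf2 : (p:ℝ)/(2*L) = ((p:ℝ)/L)/2 := by ring
      have h2k : 2*k ≤ s := by
        have h2kp : 2*k ≤ p + 1 := by
          have hx : (2*k:ℝ) < (p:ℝ) + 2 := by push_cast; linarith [hklt, hpL]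
          have : (2*k:ℕ) < p + 2 := by exact_mod_cast hx
          omega
        omega
      have hks : k ∈ range (s+1) := Finset.mem_range.2 (by omega)
      have hk0R : (0:ℝ) < k := by exact_mod_cast hk1
      obtain ⟨r, hrdef⟩ : ∃ x : ℝ, x = μ/(2*(k:ℝ)) := ⟨_, rfl⟩
      have hr0 : 0 < r := hrdef ▸ by positivity
      have h2k3 : 2*(k:ℝ) < 3*(p:ℝ)/L := by
        have h1 : 2*(k:ℝ) < (p:ℝ)/L + 2 := by
          have : (k:ℝ) < (p:ℝ)/(2*L) + 1 := hklt
          have he : (p:ℝ)/(2*L) = ((p:ℝ)/L)/2 := by ring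
          linarith [he ▸ this]
        have h2 : (2:ℝ) ≤ 2*(p:ℝ)/L := by
          rw [le_div_iff₀ hL0]; linarith [hLp]
        have h3 : (p:ℝ)/L + 2*(p:ℝ)/L = 3*(p:ℝ)/L := by ring
        linarith
      have hμL : μ = p / exp L := by
        rw [eq_div_iff (Real.exp_pos L).ne']; exact hμeL
      have hrlow : exp (-(L+2)) ≤ r := by
        have hstep : μ * L / (3*(p:ℝ)) ≤ r := by
          rw [hrdef, div_le_div_iff₀ (by positivity) (by positivity)]
          have h2k3' : 2*(k:ℝ)*L < 3*(p:ℝ) := (lt_div_iff₀ hL0).1 h2k3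
          calc μ * L * (2*(k:ℝ)) = μ * (2*(k:ℝ)*L) := by ring
            _ ≤ μ * (3*(p:ℝ)) := mul_le_mul_of_nonneg_left h2k3'.le hμ0.le
        have heq : μ * L / (3*(p:ℝ)) = L / (3 * exp L) := by
          rw [hμL]; field_simp
        have hfin : exp (-(L+2)) ≤ L / (3 * exp L) := by
          rw [Real.exp_neg, inv_eq_one_div, div_le_div_iff₀ (by positivity) (by positivity)]
          have h3 : (3:ℝ) ≤ exp 2 := by
            have := Real.add_one_le_exp (2:ℝ); linarith
          have hee : exp (L+2) = exp L * exp 2 := by rw [← Real.exp_add]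
          calc 1 * (3 * exp L) = 3 * exp L := by ring
            _ ≤ exp 2 * exp L := mul_le_mul_of_nonneg_right h3 (Real.exp_pos L).le
            _ = 1 * (exp L * exp 2) := by ring
            _ ≤ L * (exp L * exp 2) := mul_le_mul_of_nonneg_right hL1 (by positivity)
            _ = L * exp (L+2) := by rw [hee]
        calc exp (-(L+2)) ≤ L / (3 * exp L) := hfin
          _ = μ * L / (3*(p:ℝ)) := heq.symm
          _ ≤ r := hstep
      have hrk : exp (-(9/2)*(p:ℝ)) ≤ r^k := by
        have h1 : exp (-(L+2))^k ≤ r^k := pow_le_pow_left₀ (Real.exp_pos _).le hrlow k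
        have h2 : exp (-(L+2))^k = exp (-(L+2)*k) := by
          rw [← Real.exp_nat_mul]; ring_nf
        have h3 : (L+2)*(k:ℝ) ≤ (9/2)*(p:ℝ) := by
          have hkub : (k:ℝ) ≤ (p:ℝ)/(2*L) + 1 := hklt.le
          have e1 : (L+2)*(k:ℝ) ≤ (L+2)*((p:ℝ)/(2*L) + 1) :=
            mul_le_mul_of_nonneg_left hkub (by linarith)
          have e2 : (L+2)*((p:ℝ)/(2*L) + 1) = (p:ℝ)/2 + (p:ℝ)/L + L + 2 := by
            field_simp; ring
          have e5 : (2:ℝ) ≤ 2*p := by linarith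
          linarith [hpL, hLp]
        calc exp (-(9/2)*(p:ℝ)) ≤ exp (-(L+2)*k) := Real.exp_le_exp.2 (by linarith [h3])
          _ = exp (-(L+2))^k := h2.symm
          _ ≤ r^k := h1
      have he2 : (2:ℝ) ≤ exp 1 := by linarith [Real.add_one_le_exp (1:ℝ)]
      have h2μ : 2*μ ≤ μ * exp 1 := by
        have := mul_le_mul_of_nonneg_left he2 hμ0.le
        linarith
      have hαhalf : α ≤ 1/2 := by
        have h3 : α = μ/s := by rw [hμdef]; field_simp
        rw [h3, div_le_iff₀ hs0]
        linarith [hμp, hpsR, h2μ]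
      have h1as : exp (-(p:ℝ)) ≤ (1-α)^s := by
        have h1 : exp (-(2*α)) ≤ 1 - α := one_sub_ge_exp hα0.le hαhalf
        have h2 : exp (-(2*α))^s ≤ (1-α)^s := pow_le_pow_left₀ (Real.exp_pos _).le h1 s
        have h3 : exp (-(2*α))^s = exp (-(2*μ)) := by
          rw [← Real.exp_nat_mul, hμdef]; ring_nf
        have h4 : 2*μ ≤ p := by linarith [h2μ, hμp]
        calc exp (-(p:ℝ)) ≤ exp (-(2*μ)) := Real.exp_le_exp.2 (by linarith)
          _ = exp (-(2*α))^s := h3.symm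
          _ ≤ (1-α)^s := h2
      have hMlow : (c₁ * (p:ℝ) / L)^p ≤ M := by
        have hbwl : ((s:ℝ)*α/(2*k))^k * (1-α)^s ≤ bw s k α := bw_lower hα0.le hα1 hk1 h2k
        have hbw2 : r^k * exp (-(p:ℝ)) ≤ bw s k α := by
          calc r^k * exp (-(p:ℝ)) ≤ r^k * (1-α)^s :=
                mul_le_mul_of_nonneg_left h1as (by positivity)
            _ = ((s:ℝ)*α/(2*k))^k * (1-α)^s := by rw [hrdef, hμdef]
            _ ≤ bw s k α := hbwl
        have hM1 : (k:ℝ)^p * (exp (-(9/2)*(p:ℝ)) * exp (-(p:ℝ))) ≤ M := by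
          calc (k:ℝ)^p * (exp (-(9/2)*(p:ℝ)) * exp (-(p:ℝ)))
              ≤ (k:ℝ)^p * (r^k * exp (-(p:ℝ))) := by
                have := mul_le_mul_of_nonneg_right hrk (Real.exp_pos (-(p:ℝ))).le
                exact mul_le_mul_of_nonneg_left this (by positivity)
            _ ≤ (k:ℝ)^p * bw s k α := mul_le_mul_of_nonneg_left hbw2 (by positivity)
            _ ≤ M := by rw [hMdef]; exact moment_single hα0.le hα1 hks
        have hexpeq : exp (-(9/2)*(p:ℝ)) * exp (-(p:ℝ)) = (exp (-(11/2)))^p := by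
          rw [← Real.exp_add, ← Real.exp_nat_mul]
          congr 1; ring
        have h2c1 : 2*c₁ ≤ exp (-(11/2)) := by
          have he : (2:ℝ) ≤ exp (3/2) := by linarith [Real.add_one_le_exp (3/2:ℝ)]
          have hsplit : exp (-(11/2):ℝ) = exp (3/2) * exp (-7) := by
            rw [← Real.exp_add]; norm_num
          rw [hsplit, hc₁]
          exact mul_le_mul_of_nonneg_right he (Real.exp_pos _).le
        have hC : c₁ * (p:ℝ) / L ≤ (k:ℝ) * exp (-(11/2)) := by
          have heq : c₁ * (p:ℝ) / L = ((p:ℝ)/(2*L)) * (2*c₁) := by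
            field_simp
          rw [heq]
          exact mul_le_mul hkge h2c1 (by positivity) (Nat.cast_nonneg k)
        calc (c₁ * (p:ℝ) / L)^p ≤ ((k:ℝ) * exp (-(11/2)))^p :=
              pow_le_pow_left₀ (by positivity) hC p
          _ = (k:ℝ)^p * (exp (-(9/2)*(p:ℝ)) * exp (-(p:ℝ))) := by
              rw [mul_pow, hexpeq]
          _ ≤ M := hM1
      exact hlb _ (by positivity) hMlow
    · -- upper bound, case 1
      have hmgf : M ≤ ((p:ℝ)/L)^p * exp ((s:ℝ)*α*(exp L - 1) - p) := by
        rw [hMdef]; exact moment_mgf hp1 hα0.le hα1 hL0 (s := s)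
      have harg : (s:ℝ)*α*(exp L - 1) - p ≤ 0 := by
        rw [← hμdef]
        have hexpand : μ*(exp L - 1) = μ*exp L - μ := by ring
        linarith [hμeL, hμ0.le]
      have hMub : M ≤ ((p:ℝ)/L)^p := by
        calc M ≤ ((p:ℝ)/L)^p * exp ((s:ℝ)*α*(exp L - 1) - p) := hmgf
          _ ≤ ((p:ℝ)/L)^p * 1 :=
              mul_le_mul_of_nonneg_left (Real.exp_le_one_iff.2 harg) (by positivity)
          _ = ((p:ℝ)/L)^p := mul_one _
      have h1 : pnorm X p ≤ (p:ℝ)/L := hub _ (by positivity) hMub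
      have h2 : (p:ℝ)/L ≤ c₂ * p / L := by
        rw [div_le_div_iff₀ hL0 hL0]
        have : (p:ℝ)*L ≤ c₂*((p:ℝ)*L) := le_mul_of_one_le_left (by positivity) hc₂1
        linarith
      linarith
  · -- Case 2 : A < exp 1 / p
    intro hcase
    rw [lt_div_iff₀ hp0] at hcase   -- A * p < exp 1
    have hμe : (p:ℝ) < μ * exp 1 := by
      calc (p:ℝ) = (A * μ) * p := by rw [hAμ]; ring
        _ = μ * (A * p) := by ring
        _ < μ * exp 1 := mul_lt_mul_of_pos_left hcase hμ0
    have hgoal_eq2 : c₂ / A = c₂ * μ := by rw [hμA, mul_one_div]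
    have hgoal_eq1 : c₁ / A = c₁ * μ := by rw [hμA, mul_one_div]
    constructor
    · have hJ : μ^p ≤ M := by
        rw [hμdef, hMdef]; exact moment_jensen hs hα0.le hα1
      have hles : (c₁ * μ)^p ≤ μ^p :=
        pow_le_pow_left₀ (by positivity) (mul_le_of_le_one_left hμ0.le hc₁1) p
      rw [hgoal_eq1]
      exact hlb _ (by positivity) (le_trans hles hJ)
    · obtain ⟨l, hldef⟩ : ∃ x : ℝ, x = (p:ℝ)/μ := ⟨_, rfl⟩
      have hl0 : 0 < l := hldef ▸ by positivity
      have hle : l ≤ exp 1 := by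
        rw [hldef, div_le_iff₀ hμ0]
        calc (p:ℝ) ≤ μ * exp 1 := hμe.le
          _ = exp 1 * μ := mul_comm _ _
      have hmgf : M ≤ ((p:ℝ)/l)^p * exp ((s:ℝ)*α*(exp l - 1) - p) := by
        rw [hMdef]; exact moment_mgf hp1 hα0.le hα1 hl0 (s := s)
      have hpl : (p:ℝ)/l = μ := by rw [hldef]; field_simp
      have harg : (s:ℝ)*α*(exp l - 1) - p ≤ (p:ℝ) * (exp (exp 1) - 1) := by
        rw [← hμdef]
        have h1 : exp l - 1 ≤ l * exp l := by
          have ha : (1 - l) * exp l ≤ 1 := by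
            have hb := Real.add_one_le_exp (-l)
            calc (1-l)*exp l ≤ exp (-l) * exp l :=
                  mul_le_mul_of_nonneg_right (by linarith) (Real.exp_pos l).le
              _ = 1 := by rw [← Real.exp_add]; simp
          have hc : (1-l)*exp l = exp l - l*exp l := by ring
          linarith
        have h2 : μ * (exp l - 1) ≤ μ * (l * exp l) := mul_le_mul_of_nonneg_left h1 hμ0.le
        have h3 : μ * (l * exp l) = (p:ℝ) * exp l := by
          rw [hldef]; field_simp
        have h4 : (p:ℝ) * exp l ≤ (p:ℝ) * exp (exp 1) :=
          mul_le_mul_of_nonneg_left (Real.exp_le_exp.2 hle) hp0.le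
        have h5 : μ * (exp l - 1) = μ * exp l - μ := by ring
        linarith [hμ0.le, hp0.le]
      have hMub : M ≤ (μ * exp (exp (exp 1) - 1))^p := by
        calc M ≤ ((p:ℝ)/l)^p * exp ((s:ℝ)*α*(exp l - 1) - p) := hmgf
          _ ≤ μ^p * exp ((p:ℝ) * (exp (exp 1) - 1)) := by
              rw [hpl]
              exact mul_le_mul_of_nonneg_left (Real.exp_le_exp.2 harg) (by positivity)
          _ = (μ * exp (exp (exp 1) - 1))^p := by
              rw [mul_pow, ← Real.exp_nat_mul]
      have h1 : pnorm X p ≤ μ * exp (exp (exp 1) - 1) := hub _ (by positivity) hMub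
      have h2 : μ * exp (exp (exp 1) - 1) ≤ c₂ * μ := by
        rw [hc₂]
        have h3 : exp (exp (exp 1) - 1) ≤ exp (exp (exp 1)) :=
          Real.exp_le_exp.2 (by linarith [Real.exp_pos (exp 1)])
        have := mul_le_mul_of_nonneg_left h3 hμ0.le
        linarith
      rw [hgoal_eq2]
      linarith
end
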